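/- arXiv:2601.11445 — 4 statements merged into one kernel-verified Lean document; each statement's English description precedes it below -/
import Mathlib

section
/- In the sublevel-set setting, assume (a), (b) and (c), and assume additionally that C(t) ≠ ∅ for every t ∈ [0,T]. Then there exists ρ > 0 such that for every t ∈ [0,T] the set C(t) = ∩_{i=1}^m {x ∈ H : g_i(t,x) ≤ 0} is ρ-uniformly prox-regular. -/
open Set Metric Filter
open scoped Pointwise Topology
set_option maxHeartbeats 1000000

local notation "⟪" x ", " y "⟫" => @inner ℝ _ _ x y

/-- The proximal normal cone of a set `S` at a point `x`. -/
def proxNormalCone {H : Type*} [NormedAddCommGroup H] [InnerProductSpace ℝ H]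
    (S : Set H) (x : H) : Set H :=
  {ζ | ∃ σ : ℝ, 0 ≤ σ ∧ ∀ y ∈ S, (inner ℝ ζ (y - x) : ℝ) ≤ σ * ‖y - x‖ ^ 2}

/-- A set `S` is `ρ`-uniformly prox-regular. -/
def UniformProxRegular {H : Type*} [NormedAddCommGroup H] [InnerProductSpace ℝ H]
    (ρ : ℝ) (S : Set H) : Prop :=
  ∀ x ∈ S, ∀ ζ ∈ proxNormalCone S x, ∀ x' ∈ S,
    (inner ℝ ζ (x' - x) : ℝ) ≤ ‖ζ‖ / (2 * ρ) * ‖x' - x‖ ^ 2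

/-- The moving set given as a finite intersection of sublevel sets. -/
def Csub {E : Type*} {m : ℕ} (g : Fin m → ℝ → E → ℝ) (t : ℝ) : Set E :=
  {x | ∀ i, g i t x ≤ 0}

/-- The set of `ε`-active indices at `(t, x)`. -/
def Iactive {E : Type*} {m : ℕ} (g : Fin m → ℝ → E → ℝ) (ε t : ℝ) (x : E) :
    Set (Fin m) :=
  {i | -ε ≤ g i t x ∧ g i t x ≤ 0}

lemma cone_sep {F : Type*} [NormedAddCommGroup F] [InnerProductSpace ℝ F]
    [CompleteSpace F]
    (K : Set F) (hconv : Convex ℝ K) (h0 : (0:F) ∈ K)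
    (hsmul : ∀ c : ℝ, 0 ≤ c → ∀ u ∈ K, c • u ∈ K)
    (ζ : F) (hζ : ζ ∉ closure K) :
    ∃ v : F, 0 < ⟪ζ, v⟫ ∧ ∀ u ∈ K, ⟪u, v⟫ ≤ 0 := by
  obtain ⟨f, u, hfu, hb⟩ :=
    geometric_hahn_banach_point_closed hconv.closure isClosed_closure hζ
  have hu0 : u < 0 := by simpa using hb 0 (subset_closure h0)
  have hfK : ∀ w ∈ K, 0 ≤ f w := by
    intro w hw
    by_contra hneg
    push_neg at hneg
    have hcpos : (0:ℝ) ≤ u / f w + 1 := by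
      have : 0 < u / f w := div_pos_of_neg_of_neg hu0 hneg
      linarith
    have hmem : (u / f w + 1) • w ∈ K := hsmul _ hcpos w hw
    have := hb _ (subset_closure hmem)
    rw [map_smul] at this
    simp only [smul_eq_mul] at this
    rw [add_mul, div_mul_cancel₀ _ (ne_of_lt hneg), one_mul] at this
    linarith
  refine ⟨-((InnerProductSpace.toDual ℝ F).symm f), ?_, ?_⟩
  · rw [real_inner_comm, inner_neg_left, InnerProductSpace.toDual_symm_apply]
    have : f ζ < 0 := lt_trans hfu hu0
    linarith
  · intro w hw
    rw [real_inner_comm, inner_neg_left, InnerProductSpace.toDual_symm_apply]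
    linarith [hfK w hw]

/-- Separation of `0` from a closed convex set not containing it. -/

lemma pt_sep {F : Type*} [NormedAddCommGroup F] [InnerProductSpace ℝ F]
    [CompleteSpace F]
    (D : Set F) (hconv : Convex ℝ D) (hcl : IsClosed D) (h0 : (0:F) ∉ D) :
    ∃ w : F, ∀ u ∈ D, ⟪u, w⟫ < 0 := by
  obtain ⟨f, u, hfu, hb⟩ := geometric_hahn_banach_point_closed hconv hcl h0
  have hu0 : 0 < u := by simpa using hfu
  refine ⟨-((InnerProductSpace.toDual ℝ F).symm f), ?_⟩
  intro w hw
  rw [real_inner_comm, inner_neg_left, InnerProductSpace.toDual_symm_apply]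
  linarith [hb w hw]

/-- A real function vanishing at 0 with negative derivative is eventually
negative on the right. -/

lemma eventually_neg_right {φ : ℝ → ℝ} {c : ℝ} (hd : HasDerivAt φ c 0)
    (h0 : φ 0 = 0) (hc : c < 0) : ∀ᶠ s in 𝓝[>] (0:ℝ), φ s < 0 := by
  have hslope := hasDerivAt_iff_tendsto_slope.mp hd
  have h1 : ∀ᶠ s in 𝓝[≠] (0:ℝ), slope φ 0 s < 0 :=
    hslope.eventually_lt_const hc
  have h2 : ∀ᶠ s in 𝓝[>] (0:ℝ), slope φ 0 s < 0 :=
    h1.filter_mono (nhdsWithin_mono _ (fun s hs => ne_of_gt hs))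
  filter_upwards [h2, self_mem_nhdsWithin] with s hs hspos
  have : slope φ 0 s = φ s / s := by simp [slope, h0]; ring
  rw [this] at hs
  rcases div_neg_iff.mp hs with ⟨h, h'⟩ | ⟨h, h'⟩
  · exact absurd h' (not_lt.mpr (le_of_lt hspos))
  · exact h

lemma taylor_est {d : ℕ} (f : EuclideanSpace ℝ (Fin d) → ℝ) (L η : ℝ)
    (hL : 0 ≤ L) (hη : 0 < η)
    (C : Set (EuclideanSpace ℝ (Fin d)))
    (hdiff : ∀ z, DifferentiableAt ℝ f z)
    (hLipf : ∀ z ∈ C + closedBall (0 : EuclideanSpace ℝ (Fin d)) η,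
      ∀ y ∈ C + closedBall (0 : EuclideanSpace ℝ (Fin d)) η,
      ‖gradient f z - gradient f y‖ ≤ L * ‖z - y‖)
    (x x' : EuclideanSpace ℝ (Fin d)) (hx : x ∈ C) (hx' : x' ∈ C)
    (hnear : ‖x' - x‖ ≤ 2 * η) :
    ⟪gradient f x, x' - x⟫ ≤ f x' - f x + L * ‖x' - x‖ ^ 2 := by
  have hseg : ∀ z ∈ segment ℝ x x',
      z ∈ C + closedBall (0 : EuclideanSpace ℝ (Fin d)) η ∧ ‖z - x‖ ≤ ‖x' - x‖ := by
    rintro z ⟨a, b, ha, hb, hab, rfl⟩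
    have hzx : a • x + b • x' - x = b • (x' - x) := by
      have : a = 1 - b := by linarith
      rw [this]; module
    have hzx' : a • x + b • x' - x' = a • (x - x') := by
      have : b = 1 - a := by linarith
      rw [this]; module
    constructor
    · by_cases hb2 : b ≤ 1/2
      · refine ⟨x, hx, b • (x' - x), ?_, ?_⟩
        · rw [mem_closedBall_zero_iff, norm_smul, Real.norm_eq_abs, abs_of_nonneg hb]
          nlinarith [norm_nonneg (x' - x)]
        · rw [← hzx]; abel
      · refine ⟨x', hx', a • (x - x'), ?_, ?_⟩
        · rw [mem_closedBall_zero_iff, norm_smul, Real.norm_eq_abs, abs_of_nonneg ha,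
            norm_sub_rev]
          nlinarith [norm_nonneg (x' - x)]
        · rw [← hzx']; abel
    · rw [hzx, norm_smul, Real.norm_eq_abs, abs_of_nonneg hb]
      nlinarith [norm_nonneg (x' - x)]
  have hxmem : x ∈ C + closedBall (0 : EuclideanSpace ℝ (Fin d)) η :=
    ⟨x, hx, 0, mem_closedBall_self (le_of_lt hη), add_zero x⟩
  have hbound : ∀ z ∈ segment ℝ x x',
      ‖fderiv ℝ f z - fderiv ℝ f x‖ ≤ L * ‖x' - x‖ := by
    intro z hz
    have h1 : fderiv ℝ f z - fderiv ℝ f x =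
        (InnerProductSpace.toDual ℝ (EuclideanSpace ℝ (Fin d)))
          (gradient f z - gradient f x) := by
      rw [map_sub, gradient, gradient,
        (InnerProductSpace.toDual ℝ (EuclideanSpace ℝ (Fin d))).apply_symm_apply,
        (InnerProductSpace.toDual ℝ (EuclideanSpace ℝ (Fin d))).apply_symm_apply]
    rw [h1, (InnerProductSpace.toDual ℝ (EuclideanSpace ℝ (Fin d))).norm_map]
    calc ‖gradient f z - gradient f x‖ ≤ L * ‖z - x‖ :=
          hLipf z (hseg z hz).1 x hxmem
      _ ≤ L * ‖x' - x‖ := by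
          have := (hseg z hz).2
          nlinarith
  have hmain := Convex.norm_image_sub_le_of_norm_fderiv_le'
    (fun z _ => hdiff z) hbound (convex_segment x x')
    (left_mem_segment ℝ x x') (right_mem_segment ℝ x x')
  have happ : fderiv ℝ f x (x' - x) = ⟪gradient f x, x' - x⟫ := by
    rw [gradient, ← InnerProductSpace.toDual_apply_apply,
      (InnerProductSpace.toDual ℝ (EuclideanSpace ℝ (Fin d))).apply_symm_apply]
  rw [happ] at hmain
  rw [Real.norm_eq_abs, abs_le] at hmain
  nlinarith [hmain.1, hmain.2, sq_abs (‖x' - x‖)]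

lemma uniform_pli (d m : ℕ) (T : ℝ)
    (g : Fin m → ℝ → EuclideanSpace ℝ (Fin d) → ℝ)
    (ε : ℝ) (hε : 0 < ε)
    (hQbdd : Bornology.IsBounded {p : ℝ × EuclideanSpace ℝ (Fin d) |
      p.1 ∈ Icc (0:ℝ) T ∧ p.2 ∈ Csub g p.1 ∧ (Iactive g ε p.1 p.2).Nonempty})
    (hPLI : ∀ t ∈ Icc (0:ℝ) T, ∀ x ∈ Csub g t, (Iactive g ε t x).Nonempty →
      ∀ α : Fin m → ℝ, (∀ i, 0 ≤ α i) → (∀ i, i ∉ Iactive g ε t x → α i = 0) →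
        ∑ i, α i • gradient (g i t) x = 0 → ∀ i, α i = 0)
    (hg_cont : ∀ i, ContinuousOn (fun p : ℝ × EuclideanSpace ℝ (Fin d) => g i p.1 p.2)
      (Icc (0:ℝ) T ×ˢ univ))
    (hgrad_cont : ∀ i, ContinuousOn
      (fun p : ℝ × EuclideanSpace ℝ (Fin d) => gradient (g i p.1) p.2)
      (Icc (0:ℝ) T ×ˢ univ)) :
    ∃ c > 0, ∀ t ∈ Icc (0:ℝ) T, ∀ x ∈ Csub g t, ∀ β : Fin m → ℝ,
      (∀ i, 0 ≤ β i) → (∑ i, β i) = 1 → (∀ i, β i ≠ 0 → -ε ≤ g i t x) →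
      c ≤ ‖∑ i, β i • gradient (g i t) x‖ := by
  classical
  set S : Set ((ℝ × EuclideanSpace ℝ (Fin d)) × (Fin m → ℝ)) :=
    {p | p.1.1 ∈ Icc (0:ℝ) T ∧ p.1.2 ∈ Csub g p.1.1 ∧ (∀ i, 0 ≤ p.2 i) ∧
      (∑ i, p.2 i) = 1 ∧ ∀ i, p.2 i ≠ 0 → -ε ≤ g i p.1.1 p.1.2} with hS
  -- every point of S has a nonempty active set
  have hact : ∀ p ∈ S, (Iactive g ε p.1.1 p.1.2).Nonempty := by
    intro p hp
    obtain ⟨h1, h2, h3, h4, h5⟩ := hp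
    have : ∃ i, p.2 i ≠ 0 := by
      by_contra h
      push_neg at h
      rw [Finset.sum_eq_zero (fun i _ => h i)] at h4
      norm_num at h4
    obtain ⟨i, hi⟩ := this
    exact ⟨i, h5 i hi, h2 i⟩
  rcases S.eq_empty_or_nonempty with hSe | hSne
  · refine ⟨1, one_pos, ?_⟩
    intro t ht x hx β hβ0 hβ1 hβa
    exfalso
    have : ((t, x), β) ∈ S := ⟨ht, hx, hβ0, hβ1, hβa⟩
    rw [hSe] at this
    exact this
  · -- S is closed
    have hB : IsClosed {p : (ℝ × EuclideanSpace ℝ (Fin d)) × (Fin m → ℝ) | p.1.1 ∈ Icc (0:ℝ) T} :=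
      isClosed_Icc.preimage (continuous_fst.fst)
    have hgB : ∀ i, ContinuousOn (fun p : (ℝ × EuclideanSpace ℝ (Fin d)) × (Fin m → ℝ) => g i p.1.1 p.1.2)
        {p | p.1.1 ∈ Icc (0:ℝ) T} := by
      intro i
      have hmt : MapsTo (Prod.fst : (ℝ × EuclideanSpace ℝ (Fin d)) × (Fin m → ℝ) → ℝ × EuclideanSpace ℝ (Fin d)) {p : (ℝ × EuclideanSpace ℝ (Fin d)) × (Fin m → ℝ) | p.1.1 ∈ Icc (0:ℝ) T} (Icc (0:ℝ) T ×ˢ univ) := fun p hp => ⟨hp, mem_univ _⟩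
      exact (hg_cont i).comp continuous_fst.continuousOn hmt
    have h1 : ∀ (i : Fin m) (c : Set ℝ), IsClosed c →
        IsClosed {p : (ℝ × EuclideanSpace ℝ (Fin d)) × (Fin m → ℝ) |
          p.1.1 ∈ Icc (0:ℝ) T ∧ g i p.1.1 p.1.2 ∈ c} := by
      intro i c hc
      exact (hgB i).preimage_isClosed_of_isClosed hB hc
    have hSclosed : IsClosed S := by
      have : S = {p : (ℝ × EuclideanSpace ℝ (Fin d)) × (Fin m → ℝ) | p.1.1 ∈ Icc (0:ℝ) T} ∩
          (⋂ i, {p : (ℝ × EuclideanSpace ℝ (Fin d)) × (Fin m → ℝ) |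
            p.1.1 ∈ Icc (0:ℝ) T ∧ g i p.1.1 p.1.2 ∈ Iic 0}) ∩
          (⋂ i, {p : (ℝ × EuclideanSpace ℝ (Fin d)) × (Fin m → ℝ) | 0 ≤ p.2 i}) ∩
          {p : (ℝ × EuclideanSpace ℝ (Fin d)) × (Fin m → ℝ) | (∑ i, p.2 i) = 1} ∩
          (⋂ i, ({p : (ℝ × EuclideanSpace ℝ (Fin d)) × (Fin m → ℝ) | p.2 i = 0} ∪
            {p : (ℝ × EuclideanSpace ℝ (Fin d)) × (Fin m → ℝ) |
              p.1.1 ∈ Icc (0:ℝ) T ∧ g i p.1.1 p.1.2 ∈ Ici (-ε)})) := by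
        ext p
        simp only [hS, mem_setOf_eq, mem_inter_iff, mem_iInter, mem_union,
          mem_Iic, mem_Ici, Csub]
        constructor
        · rintro ⟨ha, hb, hc, hd, he⟩
          refine ⟨⟨⟨⟨ha, fun i => ⟨ha, hb i⟩⟩, hc⟩, hd⟩, fun i => ?_⟩
          by_cases hi : p.2 i = 0
          · exact Or.inl hi
          · exact Or.inr ⟨ha, he i hi⟩
        · rintro ⟨⟨⟨⟨ha, hb⟩, hc⟩, hd⟩, he⟩
          refine ⟨ha, fun i => (hb i).2, hc, hd, fun i hi => ?_⟩
          rcases he i with h | h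
          · exact absurd h hi
          · exact h.2
      rw [this]
      refine IsClosed.inter (IsClosed.inter (IsClosed.inter (IsClosed.inter hB ?_) ?_) ?_) ?_
      · exact isClosed_iInter (fun i => h1 i _ isClosed_Iic)
      · exact isClosed_iInter (fun i => isClosed_le continuous_const
          ((continuous_apply i).comp continuous_snd))
      · exact isClosed_eq (continuous_finset_sum _
          (fun i _ => (continuous_apply i).comp continuous_snd)) continuous_const
      · refine isClosed_iInter (fun i => IsClosed.union ?_ (h1 i _ isClosed_Ici))
        exact isClosed_eq ((continuous_apply i).comp continuous_snd) continuous_const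
    -- S is bounded
    have hSbdd : Bornology.IsBounded S := by
      refine (hQbdd.prod (isBounded_closedBall (x := (0 : Fin m → ℝ)) (r := 1))).subset ?_
      rintro ⟨⟨t, x⟩, β⟩ hp
      obtain ⟨h1', h2', h3', h4', h5'⟩ := hp
      refine ⟨⟨h1', h2', hact _ ⟨h1', h2', h3', h4', h5'⟩⟩, ?_⟩
      rw [mem_closedBall_zero_iff]
      refine (pi_norm_le_iff_of_nonneg zero_le_one).mpr (fun i => ?_)
      rw [Real.norm_eq_abs, abs_of_nonneg (h3' i)]
      calc β i ≤ ∑ j, β j := Finset.single_le_sum (fun j _ => h3' j) (Finset.mem_univ i)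
        _ = 1 := h4'
    have hScompact : IsCompact S := Metric.isCompact_of_isClosed_isBounded hSclosed hSbdd
    -- the function to minimize
    have hFcont : ContinuousOn
        (fun p : (ℝ × EuclideanSpace ℝ (Fin d)) × (Fin m → ℝ) => ‖∑ i, p.2 i • gradient (g i p.1.1) p.1.2‖) S := by
      refine ContinuousOn.norm ?_
      refine continuousOn_finset_sum _ (fun i _ => ContinuousOn.fun_smul ?_ ?_)
      · exact ((continuous_apply i).comp continuous_snd).continuousOn
      · have hmt : MapsTo (Prod.fst : (ℝ × EuclideanSpace ℝ (Fin d)) × (Fin m → ℝ) → ℝ × EuclideanSpace ℝ (Fin d)) S (Icc (0:ℝ) T ×ˢ univ) := fun p hp => ⟨hp.1, mem_univ _⟩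
        exact (hgrad_cont i).comp continuous_fst.continuousOn hmt
    obtain ⟨p₀, hp₀S, hp₀min⟩ := hScompact.exists_isMinOn hSne hFcont
    have hp₀pos : 0 < ‖∑ i, p₀.2 i • gradient (g i p₀.1.1) p₀.1.2‖ := by
      rcases hp₀S with ⟨h1', h2', h3', h4', h5'⟩
      rcases eq_or_lt_of_le (norm_nonneg (∑ i, p₀.2 i • gradient (g i p₀.1.1) p₀.1.2)) with h | h
      · exfalso
        have hsum0 : ∑ i, p₀.2 i • gradient (g i p₀.1.1) p₀.1.2 = 0 :=
          norm_eq_zero.mp h.symm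
        have := hPLI p₀.1.1 h1' p₀.1.2 h2' (hact _ ⟨h1', h2', h3', h4', h5'⟩) p₀.2 h3'
          (fun i hi => by
            by_contra hne
            exact hi ⟨h5' i hne, h2' i⟩) hsum0
        rw [Finset.sum_eq_zero (fun i _ => this i)] at h4'
        norm_num at h4'
      · exact h
    refine ⟨_, hp₀pos, ?_⟩
    intro t ht x hx β hβ0 hβ1 hβa
    exact isMinOn_iff.mp hp₀min ((t,x),β) ⟨ht, hx, hβ0, hβ1, hβa⟩

lemma prox_normal_mem_closure {d m : ℕ}
    (g : Fin m → ℝ → EuclideanSpace ℝ (Fin d) → ℝ) (t : ℝ)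
    (hdiff : ∀ i x, DifferentiableAt ℝ (g i t) x)
    (x : EuclideanSpace ℝ (Fin d)) (hx : x ∈ Csub g t)
    (hpli : ∀ β : Fin m → ℝ, (∀ i, 0 ≤ β i) → (∀ i, β i ≠ 0 → g i t x = 0) →
      ∑ i, β i • gradient (g i t) x = 0 → ∀ i, β i = 0)
    (ζ : EuclideanSpace ℝ (Fin d)) (hζ : ζ ∈ proxNormalCone (Csub g t) x) :
    ζ ∈ closure {u : EuclideanSpace ℝ (Fin d) | ∃ α : Fin m → ℝ, (∀ i, 0 ≤ α i) ∧
      (∀ i, α i ≠ 0 → g i t x = 0) ∧ u = ∑ i, α i • gradient (g i t) x} := by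
  classical
  set K := {u : EuclideanSpace ℝ (Fin d) | ∃ α : Fin m → ℝ, (∀ i, 0 ≤ α i) ∧
      (∀ i, α i ≠ 0 → g i t x = 0) ∧ u = ∑ i, α i • gradient (g i t) x} with hK
  by_contra hnc
  -- K is a convex cone containing 0
  have h0K : (0 : EuclideanSpace ℝ (Fin d)) ∈ K :=
    ⟨0, fun i => le_refl 0, fun i hi => absurd rfl hi, by simp⟩
  have hKconv : Convex ℝ K := by
    rintro u ⟨α, hα0, hαs, rfl⟩ u' ⟨α', hα'0, hα's, rfl⟩ a b ha hb hab
    refine ⟨fun i => a * α i + b * α' i, fun i => add_nonneg (mul_nonneg ha (hα0 i))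
      (mul_nonneg hb (hα'0 i)), fun i hi => ?_, ?_⟩
    · by_cases hg0 : g i t x = 0
      · exact hg0
      · exfalso
        apply hi
        have h1 : α i = 0 := by
          by_contra h; exact hg0 (hαs i h)
        have h2 : α' i = 0 := by
          by_contra h; exact hg0 (hα's i h)
        simp [h1, h2]
    · rw [Finset.smul_sum, Finset.smul_sum, ← Finset.sum_add_distrib]
      congr 1; ext i
      rw [smul_smul, smul_smul, ← add_smul]
  have hKsmul : ∀ c : ℝ, 0 ≤ c → ∀ u ∈ K, c • u ∈ K := by
    rintro c hc u ⟨α, hα0, hαs, rfl⟩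
    refine ⟨fun i => c * α i, fun i => mul_nonneg hc (hα0 i), fun i hi => ?_, ?_⟩
    · apply hαs
      intro h; apply hi; simp [h]
    · rw [Finset.smul_sum]
      congr 1; ext i
      rw [smul_smul]
  have hgradK : ∀ i, g i t x = 0 → gradient (g i t) x ∈ K := by
    intro i hi
    refine ⟨fun j => if j = i then 1 else 0, fun j => by positivity, fun j hj => ?_, ?_⟩
    · by_cases h : j = i
      · rw [h]; exact hi
      · simp [h] at hj
    · rw [Finset.sum_eq_single i (fun j _ hji => by simp [hji]) (by simp)]
      simp
  obtain ⟨v, hv1, hv2⟩ := cone_sep K hKconv h0K hKsmul ζ hnc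
  -- get a direction strictly decreasing all exactly-active constraints
  obtain ⟨v', hv'1, hv'2⟩ : ∃ v' : EuclideanSpace ℝ (Fin d), 0 < ⟪ζ, v'⟫ ∧
      ∀ i, g i t x = 0 → ⟪gradient (g i t) x, v'⟫ < 0 := by
    classical
    set Δ : Set (Fin m → ℝ) := {β | (∀ i, 0 ≤ β i) ∧ (∀ i, β i ≠ 0 → g i t x = 0) ∧
      ∑ i, β i = 1} with hΔ
    have hΔconv : Convex ℝ Δ := by
      rintro β ⟨h1, h2, h3⟩ β' ⟨h1', h2', h3'⟩ a b ha hb hab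
      refine ⟨fun i => ?_, fun i hi => ?_, ?_⟩
      · simp only [Pi.add_apply, Pi.smul_apply, smul_eq_mul]
        exact add_nonneg (mul_nonneg ha (h1 i)) (mul_nonneg hb (h1' i))
      · simp only [Pi.add_apply, Pi.smul_apply, smul_eq_mul] at hi
        by_cases hg0 : g i t x = 0
        · exact hg0
        · exfalso; apply hi
          have e1 : β i = 0 := by by_contra h; exact hg0 (h2 i h)
          have e2 : β' i = 0 := by by_contra h; exact hg0 (h2' i h)
          rw [e1, e2]; ring
      · simp only [Pi.add_apply, Pi.smul_apply, smul_eq_mul]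
        rw [Finset.sum_add_distrib, ← Finset.mul_sum, ← Finset.mul_sum, h3, h3']
        simpa using hab
    have hΔclosed : IsClosed Δ := by
      have hEq : Δ = (⋂ i, {β : Fin m → ℝ | 0 ≤ β i}) ∩
          ((⋂ i, {β : Fin m → ℝ | β i ≠ 0 → g i t x = 0}) ∩
            {β : Fin m → ℝ | ∑ i, β i = 1}) := by
        ext β
        simp only [hΔ, mem_setOf_eq, mem_inter_iff, mem_iInter]
      rw [hEq]
      refine IsClosed.inter (isClosed_iInter fun i =>
          isClosed_le continuous_const (continuous_apply i))
        (IsClosed.inter (isClosed_iInter fun i => ?_)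
          (isClosed_eq (continuous_finset_sum _ fun i _ => continuous_apply i)
            continuous_const))
      by_cases hgi : g i t x = 0
      · have : {β : Fin m → ℝ | β i ≠ 0 → g i t x = 0} = univ := by
          ext β; simp [hgi]
        rw [this]; exact isClosed_univ
      · have : {β : Fin m → ℝ | β i ≠ 0 → g i t x = 0} = {β : Fin m → ℝ | β i = 0} := by
          ext β; simp [hgi]
        rw [this]; exact isClosed_eq (continuous_apply i) continuous_const
    have hΔbdd : Bornology.IsBounded Δ := by
      refine (isBounded_closedBall (x := (0 : Fin m → ℝ)) (r := 1)).subset ?_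
      rintro β ⟨h1, _h2, h3⟩
      rw [mem_closedBall_zero_iff]
      refine (pi_norm_le_iff_of_nonneg zero_le_one).mpr (fun i => ?_)
      rw [Real.norm_eq_abs, abs_of_nonneg (h1 i)]
      calc β i ≤ ∑ j, β j := Finset.single_le_sum (fun j _ => h1 j) (Finset.mem_univ i)
        _ = 1 := h3
    have hΔcompact : IsCompact Δ := Metric.isCompact_of_isClosed_isBounded hΔclosed hΔbdd
    set Φ : (Fin m → ℝ) → EuclideanSpace ℝ (Fin d) :=
      fun β => ∑ i, β i • gradient (g i t) x with hΦ
    have hΦcont : Continuous Φ :=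
      continuous_finset_sum _ fun i _ => (continuous_apply i).smul continuous_const
    set D := Φ '' Δ with hD
    have hDconv : Convex ℝ D := by
      rintro u ⟨β, hβ, rfl⟩ u' ⟨β', hβ', rfl⟩ a b ha hb hab
      refine ⟨a • β + b • β', hΔconv hβ hβ' ha hb hab, ?_⟩
      show ∑ i, (a • β + b • β') i • gradient (g i t) x = a • Φ β + b • Φ β'
      simp only [hΦ]
      rw [Finset.smul_sum, Finset.smul_sum, ← Finset.sum_add_distrib]
      refine Finset.sum_congr rfl fun i _ => ?_
      simp only [Pi.add_apply, Pi.smul_apply, smul_eq_mul]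
      rw [add_smul, smul_smul, smul_smul]
    have hDcl : IsClosed D := (hΔcompact.image hΦcont).isClosed
    have h0D : (0 : EuclideanSpace ℝ (Fin d)) ∉ D := by
      rintro ⟨β, ⟨hb0, hbs, hbsum⟩, hb⟩
      have := hpli β hb0 hbs hb
      rw [Finset.sum_eq_zero (fun i _ => this i)] at hbsum
      norm_num at hbsum
    obtain ⟨w, hw⟩ := pt_sep D hDconv hDcl h0D
    have hgradD : ∀ i, g i t x = 0 → gradient (g i t) x ∈ D := by
      intro i hi
      refine ⟨fun j => if j = i then 1 else 0,
        ⟨fun j => by positivity, fun j hj => ?_, by simp⟩, ?_⟩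
      · by_cases h : j = i
        · rw [h]; exact hi
        · simp [h] at hj
      · show ∑ j, (if j = i then (1:ℝ) else 0) • gradient (g j t) x = _
        rw [Finset.sum_eq_single i (fun j _ hji => by simp [hji]) (by simp)]
        simp
    set A := |⟪ζ, w⟫| with hA'
    set δ := ⟪ζ, v⟫ / (2 * (1 + A)) with hδdef
    have hApos : (0:ℝ) < 2 * (1 + A) := by positivity
    have hδ : 0 < δ := div_pos hv1 hApos
    have hδA : δ * (2 * (1 + A)) = ⟪ζ, v⟫ := div_mul_cancel₀ _ (ne_of_gt hApos)
    refine ⟨v + δ • w, ?_, ?_⟩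
    · rw [inner_add_right, real_inner_smul_right]
      nlinarith [neg_abs_le (⟪ζ, w⟫), abs_nonneg (⟪ζ, w⟫), hδ]
    · intro i hi
      rw [inner_add_right, real_inner_smul_right]
      have h1 := hv2 _ (hgradK i hi)
      have h2 := hw _ (hgradD i hi)
      nlinarith [hδ]
  -- contradiction with the proximal normal inequality
  obtain ⟨σ, hσ, hprox⟩ := hζ
  have hline : HasDerivAt (fun s : ℝ => x + s • v') v' 0 := by
    have h1 : HasDerivAt (fun s : ℝ => s • v') ((1:ℝ) • v') 0 :=
      (hasDerivAt_id 0).smul_const v'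
    simpa using h1.const_add x
  have hCev : ∀ᶠ s in 𝓝[>] (0:ℝ), x + s • v' ∈ Csub g t := by
    have hall : ∀ i, ∀ᶠ s in 𝓝[>] (0:ℝ), g i t (x + s • v') ≤ 0 := by
      intro i
      by_cases hi : g i t x = 0
      · have hf : HasFDerivAt (g i t)
            (InnerProductSpace.toDual ℝ (EuclideanSpace ℝ (Fin d)) (gradient (g i t) x))
            (x + (0:ℝ) • v') := by
          rw [show x + (0:ℝ) • v' = x by simp]
          exact (hdiff i x).hasGradientAt.hasFDerivAt
        have hder := hf.comp_hasDerivAt (0:ℝ) hline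
        rw [InnerProductSpace.toDual_apply_apply] at hder
        have := eventually_neg_right hder (by simp [hi]) (hv'2 i hi)
        exact this.mono (fun s hs => le_of_lt hs)
      · have hlt : g i t x < 0 := lt_of_le_of_ne (hx i) hi
        have hcont0 : ContinuousAt (fun s : ℝ => x + s • v') 0 :=
          (continuous_const.add (continuous_id.smul continuous_const)).continuousAt
        have htend : Tendsto (fun s : ℝ => g i t (x + s • v')) (𝓝 0) (𝓝 (g i t x)) := by
          have h := Tendsto.comp ((hdiff i (x + (0:ℝ) • v')).continuousAt) hcont0
          rw [show x + (0:ℝ) • v' = x by simp] at h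
          exact h
        exact ((htend.eventually_lt_const hlt).filter_mono nhdsWithin_le_nhds).mono
          (fun s hs => le_of_lt hs)
    exact eventually_all.mpr hall
  have hsmall : ∀ᶠ s in 𝓝[>] (0:ℝ), σ * (s * ‖v'‖ ^ 2) < ⟪ζ, v'⟫ := by
    have htend : Tendsto (fun s : ℝ => σ * (s * ‖v'‖ ^ 2)) (𝓝 0) (𝓝 0) :=
      (continuous_const.mul (continuous_id.mul continuous_const)).tendsto' 0 0 (by simp)
    exact (htend.eventually_lt_const hv'1).filter_mono nhdsWithin_le_nhds
  obtain ⟨s, hsC, hss, hs0⟩ := (hCev.and (hsmall.and eventually_mem_nhdsWithin)).exists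
  have key := hprox (x + s • v') hsC
  have e1 : x + s • v' - x = s • v' := by abel
  rw [e1, real_inner_smul_right, norm_smul, Real.norm_eq_abs,
    abs_of_nonneg (le_of_lt hs0)] at key
  have hs0' : (0:ℝ) < s := hs0
  nlinarith [key, hss, hs0']


theorem stmt14 (d m : ℕ) (T : ℝ) (hT : 0 < T)
    (g : Fin m → ℝ → EuclideanSpace ℝ (Fin d) → ℝ)
    (hdiff : ∀ i, ∀ t ∈ Icc (0:ℝ) T, ∀ x, DifferentiableAt ℝ (g i t) x)
    -- assumption (a)
    (ε : ℝ) (hε : 0 < ε)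
    (hQbdd : Bornology.IsBounded {p : ℝ × EuclideanSpace ℝ (Fin d) |
      p.1 ∈ Icc (0:ℝ) T ∧ p.2 ∈ Csub g p.1 ∧ (Iactive g ε p.1 p.2).Nonempty})
    (hPLI : ∀ t ∈ Icc (0:ℝ) T, ∀ x ∈ Csub g t, (Iactive g ε t x).Nonempty →
      ∀ α : Fin m → ℝ, (∀ i, 0 ≤ α i) → (∀ i, i ∉ Iactive g ε t x → α i = 0) →
        ∑ i, α i • gradient (g i t) x = 0 → ∀ i, α i = 0)
    -- assumption (b)
    (hg_cont : ∀ i, ContinuousOn (fun p : ℝ × EuclideanSpace ℝ (Fin d) => g i p.1 p.2)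
      (Icc (0:ℝ) T ×ˢ univ))
    (hgrad_cont : ∀ i, ContinuousOn
      (fun p : ℝ × EuclideanSpace ℝ (Fin d) => gradient (g i p.1) p.2)
      (Icc (0:ℝ) T ×ˢ univ))
    (hequi : ∀ ε' > 0, ∃ δ > 0, ∀ i, ∀ x : EuclideanSpace ℝ (Fin d),
      ∀ s ∈ Icc (0:ℝ) T, ∀ t ∈ Icc (0:ℝ) T, |s - t| < δ → |g i s x - g i t x| < ε')
    -- assumption (c)
    (hLip : ∃ L > 0, ∃ η > 0, ∀ t ∈ Icc (0:ℝ) T, ∀ i,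
      ∀ x ∈ Csub g t + closedBall (0 : EuclideanSpace ℝ (Fin d)) η,
      ∀ y ∈ Csub g t + closedBall (0 : EuclideanSpace ℝ (Fin d)) η,
        ‖gradient (g i t) x - gradient (g i t) y‖ ≤ L * ‖x - y‖)
    (hne : ∀ t ∈ Icc (0:ℝ) T, (Csub g t).Nonempty) :
    ∃ ρ > 0, ∀ t ∈ Icc (0:ℝ) T, UniformProxRegular ρ (Csub g t) := by
  classical
  obtain ⟨L, hL, η, hη, hLip⟩ := hLip
  obtain ⟨c, hc, hcmin⟩ := uniform_pli d m T g ε hε hQbdd hPLI hg_cont hgrad_cont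
  refine ⟨min (c / (2 * L)) η, lt_min (by positivity) hη, ?_⟩
  intro t ht x hx ζ hζπ x' hx'
  set ρ := min (c / (2 * L)) η with hρ
  have hρpos : 0 < ρ := lt_min (by positivity) hη
  have hρη : ρ ≤ η := min_le_right _ _
  have hρc : ρ ≤ c / (2 * L) := min_le_left _ _
  by_cases hfar : ‖x' - x‖ ≤ 2 * η
  · -- near case
    have hpli : ∀ β : Fin m → ℝ, (∀ i, 0 ≤ β i) → (∀ i, β i ≠ 0 → g i t x = 0) →
        ∑ i, β i • gradient (g i t) x = 0 → ∀ i, β i = 0 := by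
      intro β h0 hs hsum
      by_cases hz : ∀ i, β i = 0
      · exact hz
      · push_neg at hz
        obtain ⟨i0, hi0⟩ := hz
        have hact : (Iactive g ε t x).Nonempty :=
          ⟨i0, ⟨by rw [hs i0 hi0]; linarith, by rw [hs i0 hi0]⟩⟩
        refine hPLI t ht x hx hact β h0 (fun i hi => ?_) hsum
        by_contra hne
        exact hi ⟨by rw [hs i hne]; linarith, by rw [hs i hne]⟩
    have hclos := prox_normal_mem_closure g t (fun i z => hdiff i t ht z) x hx hpli ζ hζπ
    have hKest : ∀ u ∈ {u : EuclideanSpace ℝ (Fin d) | ∃ α : Fin m → ℝ, (∀ i, 0 ≤ α i) ∧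
        (∀ i, α i ≠ 0 → g i t x = 0) ∧ u = ∑ i, α i • gradient (g i t) x},
        ⟪u, x' - x⟫ ≤ L / c * ‖u‖ * ‖x' - x‖ ^ 2 := by
      rintro u ⟨α, hα0, hαs, rfl⟩
      by_cases hz : ∀ i, α i = 0
      · have hzz : ∑ i, α i • gradient (g i t) x = 0 :=
          Finset.sum_eq_zero fun i _ => by rw [hz i]; simp
        rw [hzz]
        simp
      · push_neg at hz
        obtain ⟨i0, hi0⟩ := hz
        have hspos : 0 < ∑ i, α i :=
          Finset.sum_pos' (fun i _ => hα0 i) ⟨i0, Finset.mem_univ _,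
            lt_of_le_of_ne (hα0 i0) (Ne.symm hi0)⟩
        have hβ := hcmin t ht x hx (fun i => α i / (∑ j, α j))
          (fun i => div_nonneg (hα0 i) hspos.le)
          (by rw [← Finset.sum_div]; exact div_self (ne_of_gt hspos))
          (fun i hi => by
            have hane : α i ≠ 0 := by
              intro h
              apply hi
              show α i / (∑ j, α j) = 0
              rw [h]; simp
            rw [hαs i hane]; linarith)
        have heq : ∑ i, (α i / (∑ j, α j)) • gradient (g i t) x =
            (∑ j, α j)⁻¹ • ∑ i, α i • gradient (g i t) x := by
          rw [Finset.smul_sum]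
          refine Finset.sum_congr rfl fun i _ => ?_
          rw [smul_smul, div_eq_inv_mul]
        rw [heq, norm_smul, Real.norm_eq_abs, abs_of_nonneg (inv_nonneg.mpr hspos.le)] at hβ
        have hnorm : c * (∑ j, α j) ≤ ‖∑ i, α i • gradient (g i t) x‖ := by
          have h1 : c * (∑ j, α j) ≤ ((∑ j, α j)⁻¹ * ‖∑ i, α i • gradient (g i t) x‖) *
              (∑ j, α j) := by nlinarith
          calc c * (∑ j, α j) ≤ _ := h1
            _ = ‖∑ i, α i • gradient (g i t) x‖ := by field_simp
        have hterm : ∀ i, α i * ⟪gradient (g i t) x, x' - x⟫ ≤ α i * (L * ‖x' - x‖ ^ 2) := by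
          intro i
          by_cases hi : α i = 0
          · simp [hi]
          · have hgi := hαs i hi
            have ht1 := taylor_est (g i t) L η (le_of_lt hL) hη (Csub g t)
              (fun z => hdiff i t ht z) (hLip t ht i) x x' hx hx' hfar
            have h2 : ⟪gradient (g i t) x, x' - x⟫ ≤ L * ‖x' - x‖ ^ 2 := by
              rw [hgi] at ht1
              linarith [hx' i]
            exact mul_le_mul_of_nonneg_left h2 (hα0 i)
        calc ⟪∑ i, α i • gradient (g i t) x, x' - x⟫
            = ∑ i, α i * ⟪gradient (g i t) x, x' - x⟫ := by
              rw [sum_inner]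
              exact Finset.sum_congr rfl fun i _ => real_inner_smul_left _ _ _
          _ ≤ ∑ i, α i * (L * ‖x' - x‖ ^ 2) := Finset.sum_le_sum (fun i _ => hterm i)
          _ = (∑ i, α i) * (L * ‖x' - x‖ ^ 2) := by rw [← Finset.sum_mul]
          _ ≤ L / c * ‖∑ i, α i • gradient (g i t) x‖ * ‖x' - x‖ ^ 2 := by
              have hsle : (∑ i, α i) ≤ ‖∑ i, α i • gradient (g i t) x‖ / c := by
                rw [le_div_iff₀ hc]
                linarith [hnorm]
              have hn2 : (0:ℝ) ≤ ‖x' - x‖ ^ 2 := sq_nonneg _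
              have := mul_le_mul_of_nonneg_right hsle
                (mul_nonneg (le_of_lt hL) hn2)
              calc (∑ i, α i) * (L * ‖x' - x‖ ^ 2)
                  ≤ (‖∑ i, α i • gradient (g i t) x‖ / c) * (L * ‖x' - x‖ ^ 2) := this
                _ = L / c * ‖∑ i, α i • gradient (g i t) x‖ * ‖x' - x‖ ^ 2 := by ring
    have hcl : IsClosed {u : EuclideanSpace ℝ (Fin d) |
        ⟪u, x' - x⟫ ≤ L / c * ‖u‖ * ‖x' - x‖ ^ 2} := by
      refine isClosed_le ?_ ?_
      · exact continuous_id.inner continuous_const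
      · exact ((continuous_const.mul continuous_norm).mul continuous_const)
    have hfinal : ⟪ζ, x' - x⟫ ≤ L / c * ‖ζ‖ * ‖x' - x‖ ^ 2 :=
      closure_minimal hKest hcl hclos
    have h1 : L / c * ‖ζ‖ ≤ ‖ζ‖ / (2 * ρ) := by
      rw [div_mul_eq_mul_div, div_le_div_iff₀ hc (by positivity)]
      have h2 : 2 * L * ρ ≤ c := by
        rw [← le_div_iff₀' (by positivity)]
        exact hρc
      nlinarith [norm_nonneg ζ]
    nlinarith [sq_nonneg ‖x' - x‖, h1, hfinal]
  · -- far case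
    push_neg at hfar
    have hcs := real_inner_le_norm ζ (x' - x)
    have h2ρ : 2 * ρ ≤ ‖x' - x‖ := by
      have : 2 * ρ ≤ 2 * η := by linarith
      linarith
    have hmain : ‖ζ‖ * ‖x' - x‖ ≤ ‖ζ‖ / (2 * ρ) * ‖x' - x‖ ^ 2 := by
      rw [div_mul_eq_mul_div, le_div_iff₀ (by positivity)]
      have hprod := mul_le_mul_of_nonneg_left h2ρ
        (mul_nonneg (norm_nonneg ζ) (norm_nonneg (x' - x)))
      nlinarith [hprod]
    linarith
end

section
/- Let H be a real Hilbert space and C : [0,T] ⇉ H a set-valued map satisfying conditions (H1) (with constant ρ > 0), (H2) and (H4). Let A ⊆ C([0,T];H) be an equicontinuous family of continuous functions with h(0) = 0 for every h ∈ A. Then there exist δ > 0 and 𝔯 > 0 such that for every h ∈ A, every t̄ ∈ [0,T] and every x̄ ∈ bd(C(t̄) − h(t̄)), there exists z ∈ H satisfying: (i) the open ball B_𝔯(z) is contained in C(t) − h(t) for every t ∈ (t̄ − δ, t̄ + δ) ∩ [0,T], and (ii) (1/ρ)(‖x̄ − z‖ + 𝔯)² < 𝔯/2. -/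
set_option maxHeartbeats 1000000

open Set Metric
open scoped ENNReal

/-- A set-valued map is Hausdorff-continuous on `[0,T]`. -/
def HausdorffCts {H : Type*} [NormedAddCommGroup H] (T : ℝ) (C : ℝ → Set H) : Prop :=
  ∀ ε > 0, ∃ δ > 0, ∀ s ∈ Icc (0:ℝ) T, ∀ t ∈ Icc (0:ℝ) T, |s - t| < δ →
    EMetric.hausdorffEdist (C s) (C t) < ENNReal.ofReal ε

/-- Condition (H4) with constants `r, L`. -/
def CondH4 {H : Type*} [NormedAddCommGroup H] [InnerProductSpace ℝ H]
    (T : ℝ) (C : ℝ → Set H) (r L : ℝ) : Prop :=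
  ∀ t ∈ Icc (0:ℝ) T, ∀ x ∈ frontier (C t), ∃ z : H,
    convexHull ℝ ({x} ∪ ball z (2 * r)) ⊆ C t ∧ ‖z - x‖ ≤ L * r

section Aux

open Filter

variable {H : Type*} [NormedAddCommGroup H] [InnerProductSpace ℝ H]

private lemma pinning_aux (u v : H) (t d ε δ : ℝ) (ht0 : 0 < t) (ht1 : t ≤ 1) (hd : 0 ≤ d)
    (hε : 0 ≤ ε) (hδ : 0 ≤ δ)
    (hm : ‖v‖ ≤ d + ε) (hc : d ≤ ‖u‖) (hb : ‖u - t • v‖ ≤ (1 - t) * ‖v‖ + δ) :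
    t * ‖u - v‖ ^ 2 ≤ 2 * d * ε + ε ^ 2 + 2 * ‖v‖ * δ + δ ^ 2 := by
  have hid : t * ‖u - v‖ ^ 2 = ‖u - t • v‖ ^ 2 + t * (1 - t) * ‖v‖ ^ 2 - (1 - t) * ‖u‖ ^ 2 := by
    have h1 := norm_sub_sq_real u v
    have h2 := norm_sub_sq_real u (t • v)
    have h3 : (inner ℝ u (t • v) : ℝ) = t * inner ℝ u v := real_inner_smul_right u v t
    have h4 : ‖t • v‖ ^ 2 = t ^ 2 * ‖v‖ ^ 2 := by
      rw [norm_smul, Real.norm_eq_abs, abs_of_pos ht0]; ring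
    rw [h1, h2, h3, h4]; ring
  have hb0 : 0 ≤ ‖u - t • v‖ := norm_nonneg _
  have hm0 : 0 ≤ ‖v‖ := norm_nonneg _
  have ht1' : 0 ≤ 1 - t := by linarith
  have hbsq : ‖u - t • v‖ ^ 2 ≤ ((1 - t) * ‖v‖ + δ) ^ 2 := by
    apply sq_le_sq' _ hb; nlinarith
  have hcsq : d ^ 2 ≤ ‖u‖ ^ 2 := by nlinarith
  have hmsq : ‖v‖ ^ 2 - d ^ 2 ≤ 2 * d * ε + ε ^ 2 := by nlinarith
  have key : (1 - t) * (‖v‖ ^ 2 - d ^ 2) ≤ (1 - t) * (2 * d * ε + ε ^ 2) :=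
    mul_le_mul_of_nonneg_left hmsq ht1'
  have hA : 0 ≤ 2 * d * ε + ε ^ 2 := by positivity
  have key2 : (1 - t) * (2 * d * ε + ε ^ 2) ≤ 2 * d * ε + ε ^ 2 := by
    nlinarith [mul_nonneg ht0.le hA]
  have key3 : 2 * ((1 - t) * ‖v‖) * δ ≤ 2 * ‖v‖ * δ := by
    nlinarith [mul_nonneg (mul_nonneg ht0.le hm0) hδ]
  nlinarith [key, key2, key3]

/-- In a Hilbert space, arbitrarily close to any point there is a point that admits a
nearest point in a given nonempty closed set. -/
private lemma exists_attained [CompleteSpace H]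
    (S : Set H) (hS : IsClosed S) (hne : S.Nonempty) (p : H) (η : ℝ) (hη : 0 < η) :
    ∃ p' q, q ∈ S ∧ ‖p' - p‖ ≤ η ∧ ∀ y ∈ S, dist p' q ≤ dist p' y := by
  classical
  have hd0n : 0 ≤ infDist p S := infDist_nonneg
  set d0 : ℝ := infDist p S with hd0
  set M : ℝ := d0 + 2 with hM
  have hMpos : 0 < M := by positivity
  set τ : ℝ := min (1/2) (η / (4 * M)) with hτ
  have hτpos : 0 < τ := lt_min (by norm_num) (by positivity)
  have hτhalf : τ ≤ 1/2 := min_le_left _ _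
  set ε : ℕ → ℝ := fun n => τ * (1/8)^n with hεdef
  set t : ℕ → ℝ := fun n => τ * (1/2)^n with htdef
  have hεpos : ∀ n, 0 < ε n := fun n => by positivity
  have htpos : ∀ n, 0 < t n := fun n => by positivity
  have ht1 : ∀ n, t n ≤ 1 := fun n => by
    have h : (1/2:ℝ)^n ≤ 1 := pow_le_one₀ (by norm_num) (by norm_num)
    calc t n ≤ τ * 1 := mul_le_mul_of_nonneg_left h hτpos.le
      _ ≤ 1 := by linarith [hτhalf]
  have hετ : ∀ n, ε n ≤ τ := fun n => by
    have h : (1/8:ℝ)^n ≤ 1 := pow_le_one₀ (by norm_num) (by norm_num)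
    calc ε n ≤ τ * 1 := mul_le_mul_of_nonneg_left h hτpos.le
      _ = τ := mul_one τ
  have hch : ∀ (x : H) (n : ℕ), ∃ q, q ∈ S ∧ dist x q < infDist x S + ε n := by
    intro x n
    exact (Metric.infDist_lt_iff hne).mp (by linarith [hεpos n, infDist_nonneg (x := x) (s := S)])
  choose E hE1 hE2 using hch
  obtain ⟨pseq, hp0, hstep⟩ : ∃ f : ℕ → H, f 0 = p ∧
      ∀ n, f (n+1) = f n + t n • (E (f n) n - f n) :=
    ⟨fun n => Nat.rec p (fun n pn => pn + t n • (E pn n - pn)) n, rfl, fun n => rfl⟩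
  set qseq : ℕ → H := fun n => E (pseq n) n with hqseq
  have hstep' : ∀ n, pseq (n+1) = pseq n + t n • (qseq n - pseq n) := hstep
  have hshrink : ∀ n, dist (pseq (n+1)) (qseq n) = (1 - t n) * dist (pseq n) (qseq n) := by
    intro n
    rw [hstep' n, dist_eq_norm, dist_eq_norm]
    have h : pseq n + t n • (qseq n - pseq n) - qseq n = (1 - t n) • (pseq n - qseq n) := by
      module
    rw [h, norm_smul, Real.norm_eq_abs, abs_of_nonneg (by linarith [ht1 n])]
  have hinv : ∀ n, infDist (pseq n) S ≤ d0 + 2 * τ * (1 - (1/8)^n) := by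
    intro n
    induction n with
    | zero => rw [hp0]; simp [hd0]
    | succ n ih =>
      have h1 : infDist (pseq (n+1)) S ≤ dist (pseq (n+1)) (qseq n) :=
        infDist_le_dist_of_mem (hE1 _ _)
      have h2 := hshrink n
      have h3 : dist (pseq n) (qseq n) ≤ infDist (pseq n) S + ε n := (hE2 _ _).le
      have h4 : (1 - t n) * dist (pseq n) (qseq n) ≤ dist (pseq n) (qseq n) := by
        nlinarith [dist_nonneg (x := pseq n) (y := qseq n), htpos n]
      have h5 : (1/8:ℝ)^(n+1) = (1/8)^n * (1/8) := pow_succ _ _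
      have h6 : ε n = τ * (1/8)^n := rfl
      have h8 : (0:ℝ) < (1/8)^n := by positivity
      calc infDist (pseq (n+1)) S ≤ dist (pseq n) (qseq n) := by linarith [h1, h2.le, h4]
        _ ≤ infDist (pseq n) S + ε n := h3
        _ ≤ d0 + 2 * τ * (1 - (1/8)^n) + τ * (1/8)^n := by linarith [ih]
        _ ≤ d0 + 2 * τ * (1 - (1/8)^(n+1)) := by rw [h5]; nlinarith [hτpos]
  have hdB : ∀ n, infDist (pseq n) S ≤ d0 + 1 := by
    intro n
    have h := hinv n
    have h8 : (0:ℝ) ≤ (1/8)^n := by positivity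
    nlinarith [hτpos, hτhalf]
  have hmB : ∀ n, dist (pseq n) (qseq n) ≤ M := by
    intro n
    have h1 := (hE2 (pseq n) n).le
    have h2 := hdB n
    have h3 := hετ n
    rw [hM]
    linarith [hτhalf]
  have hpdist : ∀ n, dist (pseq n) (pseq (n+1)) ≤ (τ * M) * (1/2)^n := by
    intro n
    rw [hstep' n, dist_eq_norm]
    have h : pseq n - (pseq n + t n • (qseq n - pseq n)) = t n • (pseq n - qseq n) := by
      module
    rw [h, norm_smul, Real.norm_eq_abs, abs_of_pos (htpos n), ← dist_eq_norm]
    calc t n * dist (pseq n) (qseq n) ≤ t n * M :=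
          mul_le_mul_of_nonneg_left (hmB n) (htpos n).le
      _ = (τ * M) * (1/2)^n := by rw [htdef]; ring
  have hpC : CauchySeq pseq := cauchySeq_of_le_geometric (1/2) (τ * M) (by norm_num) hpdist
  obtain ⟨p', hp'⟩ := cauchySeq_tendsto_of_complete hpC
  set K : ℝ := Real.sqrt (4 * d0 + 8) with hK
  have hqdist : ∀ n, dist (qseq n) (qseq (n+1)) ≤ K * (1/2)^n := by
    intro n
    have hpin := pinning_aux (qseq (n+1) - pseq n) (qseq n - pseq n) (t n) (infDist (pseq n) S)
      (ε n) (ε (n+1)) (htpos n) (ht1 n) infDist_nonneg (hεpos n).le (hεpos (n+1)).le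
      ?_ ?_ ?_
    · have huv : qseq (n+1) - pseq n - (qseq n - pseq n) = qseq (n+1) - qseq n := by abel
      rw [huv] at hpin
      have hεtn : ε n / t n = (1/4)^n := by
        rw [hεdef, htdef]
        simp only
        rw [mul_div_mul_left _ _ (ne_of_gt hτpos), ← div_pow]
        norm_num
      have hnv : ‖qseq n - pseq n‖ = dist (pseq n) (qseq n) := by
        rw [dist_eq_norm, norm_sub_rev]
      have hRHS : 2 * infDist (pseq n) S * ε n + ε n ^ 2 + 2 * ‖qseq n - pseq n‖ * ε (n+1)
          + ε (n+1) ^ 2 ≤ ε n * (4 * d0 + 8) := by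
        have h1 := hdB n
        have h2 := hmB n
        have h3 : ε (n+1) ≤ ε n := by
          apply mul_le_mul_of_nonneg_left _ hτpos.le
          apply pow_le_pow_of_le_one (by norm_num) (by norm_num)
          omega
        have h4 : ε n ≤ 1 := le_trans (hετ n) (by linarith)
        have h5 := (hεpos n).le
        have h6 := (hεpos (n+1)).le
        have h7 := infDist_nonneg (x := pseq n) (s := S)
        have h4' : ε (n+1) ≤ 1 := le_trans h3 h4
        have h2' : ‖qseq n - pseq n‖ ≤ d0 + 2 := by rw [hnv]; exact h2
        have h8 : (0:ℝ) ≤ ‖qseq n - pseq n‖ := norm_nonneg _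
        nlinarith [mul_nonneg (sub_nonneg.2 h1) h5, mul_nonneg (sub_nonneg.2 h4) h5,
          mul_nonneg (sub_nonneg.2 h2') h6,
          mul_nonneg (sub_nonneg.2 h3) (by positivity : (0:ℝ) ≤ d0 + 2),
          mul_nonneg (sub_nonneg.2 h4') h6, mul_nonneg (sub_nonneg.2 h3) h6]
      have hsq : ‖qseq (n+1) - qseq n‖^2 ≤ (4 * d0 + 8) * (1/4)^n := by
        have htn := htpos n
        rw [← hεtn, ← mul_div_assoc, le_div_iff₀ htn]
        nlinarith [hpin, hRHS]
      have hKsq : (K * (1/2)^n)^2 = (4 * d0 + 8) * (1/4)^n := by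
        rw [mul_pow, hK, Real.sq_sqrt (by positivity), ← pow_mul, mul_comm n 2, pow_mul]
        norm_num
      have h0 : (0:ℝ) ≤ K * (1/2)^n := by positivity
      rw [dist_eq_norm, norm_sub_rev]
      nlinarith [norm_nonneg (qseq (n+1) - qseq n), hsq, hKsq]
    · rw [← dist_eq_norm, dist_comm]
      exact (hE2 _ _).le
    · rw [← dist_eq_norm, dist_comm]
      exact infDist_le_dist_of_mem (hE1 _ _)
    · have h : qseq (n+1) - pseq n - t n • (qseq n - pseq n) = qseq (n+1) - pseq (n+1) := by
        rw [hstep' n]; module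
      rw [h, ← dist_eq_norm, dist_comm]
      calc dist (pseq (n+1)) (qseq (n+1)) ≤ infDist (pseq (n+1)) S + ε (n+1) := (hE2 _ _).le
        _ ≤ dist (pseq (n+1)) (qseq n) + ε (n+1) := by
            linarith [infDist_le_dist_of_mem (x := pseq (n+1)) (hE1 (pseq n) n)]
        _ = (1 - t n) * dist (pseq n) (qseq n) + ε (n+1) := by rw [hshrink n]
        _ = (1 - t n) * ‖qseq n - pseq n‖ + ε (n+1) := by
            rw [dist_eq_norm, norm_sub_rev]
  have hqC : CauchySeq qseq := cauchySeq_of_le_geometric (1/2) K (by norm_num) hqdist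
  obtain ⟨q', hq'⟩ := cauchySeq_tendsto_of_complete hqC
  refine ⟨p', q', ?_, ?_, ?_⟩
  · exact hS.mem_of_tendsto hq' (Eventually.of_forall (fun n => hE1 _ _))
  · have h0 : dist (pseq 0) p' ≤ (τ * M) / (1 - 1/2) :=
      dist_le_of_le_geometric_of_tendsto₀ (1/2) (τ * M) (by norm_num) hpdist hp'
    rw [← dist_eq_norm, dist_comm, ← hp0]
    have hτ2 : τ ≤ η / (4 * M) := min_le_right _ _
    rw [le_div_iff₀ (by positivity)] at hτ2
    have h1 : (τ * M) / (1 - 1/2) = 2 * (τ * M) := by ring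
    rw [h1] at h0
    nlinarith [hτpos, hMpos]
  · intro y hy
    have key : dist p' q' ≤ infDist p' S := by
      have hL : Tendsto (fun n => dist (pseq n) (qseq n)) atTop (nhds (dist p' q')) :=
        hp'.dist hq'
      have hR : Tendsto (fun n => infDist (pseq n) S + ε n) atTop (nhds (infDist p' S + 0)) := by
        apply Tendsto.add
        · exact ((continuous_infDist_pt S).tendsto p').comp hp'
        · have h : Tendsto (fun n : ℕ => (1/8:ℝ)^n) atTop (nhds 0) := by
            apply tendsto_pow_atTop_nhds_zero_of_lt_one <;> norm_num
          have h2 := h.const_mul τ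
          rw [mul_zero] at h2
          exact h2
      rw [add_zero] at hR
      exact le_of_tendsto_of_tendsto' hL hR (fun n => (hE2 _ _).le)
    exact le_trans key (infDist_le_dist_of_mem hy)

/-- Stability of interior balls under small Hausdorff perturbations, for prox-regular sets. -/
private lemma core_stability [CompleteSpace H] (ρ R ε : ℝ) (hρ : 0 < ρ)
    (hR : 0 < R) (hRρ : R ≤ ρ/3) (hε0 : 0 < ε) (hεR : ε ≤ R/4)
    (S S' : Set H) (hS'c : IsClosed S') (hS'ne : S'.Nonempty)
    (hreg : UniformProxRegular ρ S')
    (hnear : ∀ u ∈ S, ∃ y ∈ S', dist u y < ε)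
    (z : H) (hball : ball z (2*R) ⊆ S) :
    ball z (R/2) ⊆ S' := by
  intro p hp
  by_contra hpS'
  have hpz : dist p z < R/2 := mem_ball.mp hp
  have hpS : p ∈ S := hball (mem_ball.mpr (by linarith))
  obtain ⟨y0, hy0, hy0d⟩ := hnear p hpS
  have hd_pos : 0 < infDist p S' := by rwa [← hS'c.notMem_iff_infDist_pos hS'ne]
  set d : ℝ := infDist p S' with hd
  have hdε : d < ε := lt_of_le_of_lt (infDist_le_dist_of_mem hy0) hy0d
  obtain ⟨p', q, hq, hp'p, hmin⟩ := exists_attained S' hS'c hS'ne p (d/2) (by positivity)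
  set D : ℝ := dist p' q with hD
  have hDnn : 0 ≤ D := dist_nonneg
  have hDlow : d/2 ≤ D := by
    have h1 : d ≤ dist p q := infDist_le_dist_of_mem hq
    have h2 : dist p q ≤ dist p p' + dist p' q := dist_triangle _ _ _
    have h3 : dist p p' ≤ d/2 := by rw [dist_comm, dist_eq_norm]; exact hp'p
    linarith
  have hDpos : 0 < D := lt_of_lt_of_le (by positivity) hDlow
  have hDhi : D ≤ 3*ε/2 := by
    have h1 : D ≤ dist p' y0 := hmin y0 hy0
    have h2 : dist p' y0 ≤ dist p' p + dist p y0 := dist_triangle _ _ _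
    have h3 : dist p' p ≤ d/2 := by rw [dist_eq_norm]; exact hp'p
    linarith
  set ζ : H := p' - q with hζ
  have hζnorm : ‖ζ‖ = D := by rw [hζ, hD, dist_eq_norm]
  have hcone : ζ ∈ proxNormalCone S' q := by
    refine ⟨1/2, by norm_num, fun y hy => ?_⟩
    have h1 : ‖p' - q‖ ≤ ‖p' - y‖ := by
      rw [← dist_eq_norm, ← dist_eq_norm]; exact hmin y hy
    have h2 : ‖ζ - (y - q)‖ = ‖p' - y‖ := by rw [hζ]; congr 1; abel
    have h3 := norm_sub_sq_real ζ (y - q)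
    rw [h2] at h3
    nlinarith [norm_nonneg (p' - q), norm_nonneg (p' - y), hζnorm]
  set w : H := p' + (R/D) • ζ with hw
  have hwp' : ‖w - p'‖ = R := by
    rw [hw]
    have h : p' + (R/D) • ζ - p' = (R/D) • ζ := by abel
    rw [h, norm_smul, Real.norm_eq_abs, abs_of_pos (by positivity), hζnorm]
    field_simp
  have hwS : w ∈ S := by
    apply hball
    rw [mem_ball, dist_eq_norm]
    have h1 : w - z = (w - p') + (p' - p) + (p - z) := by abel
    have h2 : ‖w - z‖ ≤ ‖w - p'‖ + ‖p' - p‖ + ‖p - z‖ := by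
      rw [h1]; exact le_trans (norm_add_le _ _) (by gcongr; exact norm_add_le _ _)
    rw [← dist_eq_norm (p) (z)] at h2
    linarith [hwp', hp'p, hpz, hdε]
  obtain ⟨x', hx', hx'd⟩ := hnear w hwS
  have hPR := hreg q hq ζ hcone x' hx'
  have hwq : w - q = (1 + R/D) • ζ := by
    rw [hw, hζ]
    have h : p' + (R / D) • (p' - q) - q = (1:ℝ) • (p' - q) + (R/D) • (p' - q) := by
      rw [one_smul]; abel
    rw [h, ← add_smul]
  have hiw : (inner ℝ ζ (w - q) : ℝ) = D^2 + R*D := by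
    rw [hwq, real_inner_smul_right, real_inner_self_eq_norm_sq, hζnorm]
    field_simp
  have hsplit : (inner ℝ ζ (x' - q) : ℝ) = inner ℝ ζ (w - q) + inner ℝ ζ (x' - w) := by
    rw [← inner_add_right]; congr 1; abel
  have hxw : ‖x' - w‖ < ε := by rw [← dist_eq_norm, dist_comm]; exact hx'd
  have hibound : (inner ℝ ζ (x' - w) : ℝ) ≥ -(D * ε) := by
    have h1 := abs_real_inner_le_norm ζ (x' - w)
    have h2 : ‖ζ‖ * ‖x' - w‖ ≤ D * ε := by
      rw [hζnorm]; exact mul_le_mul_of_nonneg_left hxw.le hDnn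
    have h3 := neg_abs_le (inner ℝ ζ (x' - w) : ℝ)
    linarith
  have hLHS : D^2 + R*D - D*ε ≤ (inner ℝ ζ (x' - q) : ℝ) := by
    rw [hsplit, hiw]; linarith
  have hxq : ‖x' - q‖ ≤ ε + D + R := by
    have h1 : x' - q = (x' - w) + (w - q) := by abel
    have h2 : ‖x' - q‖ ≤ ‖x' - w‖ + ‖w - q‖ := by rw [h1]; exact norm_add_le _ _
    have h3 : ‖w - q‖ ≤ D + R := by
      rw [hwq, norm_smul, Real.norm_eq_abs, abs_of_pos (by positivity), hζnorm]
      rw [add_mul, div_mul_comm]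
      field_simp
      norm_num
    linarith
  have hchain : D^2 + R*D - D*ε ≤ ‖ζ‖/(2*ρ) * ‖x' - q‖^2 := le_trans hLHS hPR
  have hxq2 : ‖x' - q‖^2 ≤ (ε + D + R)^2 := by
    nlinarith [norm_nonneg (x' - q)]
  have hchain2 : D^2 + R*D - D*ε ≤ D/(2*ρ) * (ε + D + R)^2 := by
    rw [hζnorm] at hchain
    have h := mul_le_mul_of_nonneg_left hxq2 (show (0:ℝ) ≤ D/(2*ρ) by positivity)
    linarith
  have hchain3 : D * ((2*ρ) * (D + R - ε)) ≤ D * ((ε + D + R)^2) := by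
    rw [div_mul_eq_mul_div, le_div_iff₀ (by positivity : (0:ℝ) < 2*ρ)] at hchain2
    nlinarith [hchain2]
  have hfinal : (2*ρ) * (D + R - ε) ≤ (ε + D + R)^2 := (mul_le_mul_iff_right₀ hDpos).mp hchain3
  have hb1 : ε + D + R ≤ (13/8) * R := by linarith
  have hb2 : (ε + D + R)^2 ≤ ((13/8)*R)^2 := by nlinarith [hDnn, hε0.le]
  nlinarith [hfinal, hb2, hρ, hR, hεR, hRρ, hDnn]

end Aux

theorem stmt15 {H : Type*} [NormedAddCommGroup H] [InnerProductSpace ℝ H] [CompleteSpace H]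
    (T : ℝ) (hT : 0 < T) (C : ℝ → Set H)
    (ρ : ℝ) (hρ : 0 < ρ)
    (hH1 : ∀ t ∈ Icc (0:ℝ) T, (C t).Nonempty ∧ IsClosed (C t) ∧ UniformProxRegular ρ (C t))
    (hH2 : HausdorffCts T C)
    (hH4 : ∃ r > 0, ∃ L > 0, CondH4 T C r L)
    (A : Set (ℝ → H))
    (hcont : ∀ h ∈ A, ContinuousOn h (Icc 0 T))
    (hzero : ∀ h ∈ A, h 0 = 0)
    (hequi : ∀ ε > 0, ∃ δ > 0, ∀ h ∈ A, ∀ s ∈ Icc (0:ℝ) T, ∀ t ∈ Icc (0:ℝ) T,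
      |s - t| < δ → ‖h s - h t‖ < ε) :
    ∃ δ > 0, ∃ 𝔯 > 0, ∀ h ∈ A, ∀ tbar ∈ Icc (0:ℝ) T,
      ∀ xbar ∈ frontier ((· - h tbar) '' C tbar), ∃ z : H,
        (∀ t ∈ Icc (0:ℝ) T, |t - tbar| < δ → ball z 𝔯 ⊆ (· - h t) '' C t) ∧
        1 / ρ * (‖xbar - z‖ + 𝔯) ^ 2 < 𝔯 / 2 := by
  obtain ⟨r, hr, L, hL, hH4'⟩ := hH4
  set rt : ℝ := min r (ρ / (9 * (L+1)^2)) with hrt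
  have hrtpos : 0 < rt := lt_min hr (by positivity)
  have hrtr : rt ≤ r := min_le_left _ _
  have hrtρ9 : rt ≤ ρ / (9 * (L+1)^2) := min_le_right _ _
  have hrtρ9' : rt * (9 * (L+1)^2) ≤ ρ := by
    rw [le_div_iff₀ (by positivity)] at hrtρ9
    linarith
  have hrtρ : rt ≤ ρ / 3 := by
    have h1 : (1:ℝ) ≤ (L+1)^2 := by nlinarith [hL.le]
    rw [le_div_iff₀ (by norm_num : (0:ℝ) < 3)]
    nlinarith [hrtpos.le]
  obtain ⟨δ1, hδ1, hH2'⟩ := hH2 (rt/8) (by positivity)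
  obtain ⟨δ2, hδ2, hequi'⟩ := hequi (rt/4) (by positivity)
  refine ⟨min δ1 δ2, lt_min hδ1 hδ2, rt/4, by positivity, ?_⟩
  intro h hA tbar htbar xbar hxbar
  -- recover the untranslated boundary point
  have hhomeo : (⇑(Homeomorph.subRight (h tbar)) : H → H) = (fun y : H => y - h tbar) := rfl
  have hfr := (Homeomorph.subRight (h tbar)).image_frontier (C tbar)
  rw [hhomeo] at hfr
  have hxbar' : xbar ∈ (fun y : H => y - h tbar) '' (frontier (C tbar)) := by
    rw [hfr]; exact hxbar
  obtain ⟨x, hxf, hxe⟩ := hxbar'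
  obtain ⟨z₀, hconv, hz₀⟩ := hH4' tbar htbar x hxf
  set lam : ℝ := rt / r with hlam
  have hlam0 : 0 < lam := by positivity
  have hlam1 : lam ≤ 1 := by rw [hlam, div_le_one hr]; exact hrtr
  set zc : H := x + lam • (z₀ - x) with hzc
  have hzcx : ‖zc - x‖ ≤ L * rt := by
    have h1 : zc - x = lam • (z₀ - x) := by rw [hzc]; abel
    rw [h1, norm_smul, Real.norm_eq_abs, abs_of_pos hlam0]
    calc lam * ‖z₀ - x‖ ≤ lam * (L * r) := mul_le_mul_of_nonneg_left hz₀ hlam0.le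
      _ = L * rt := by rw [hlam]; field_simp
  have hball : ball zc (2*rt) ⊆ C tbar := by
    intro u hu
    have hurc : ‖u - zc‖ < 2*rt := by rw [← dist_eq_norm, ← mem_ball]; exact hu
    set b : H := z₀ + (r/rt) • (u - zc) with hb
    have hbmem : b ∈ ball z₀ (2*r) := by
      rw [mem_ball, dist_eq_norm]
      have h1 : b - z₀ = (r/rt) • (u - zc) := by rw [hb]; abel
      rw [h1, norm_smul, Real.norm_eq_abs, abs_of_pos (by positivity)]
      rw [div_mul_eq_mul_div, div_lt_iff₀ hrtpos]
      calc r * ‖u - zc‖ < r * (2*rt) := by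
            exact (mul_lt_mul_iff_right₀ hr).mpr hurc
        _ = 2*r*rt := by ring
    have hlamr : lam * (r/rt) = 1 := by rw [hlam]; field_simp
    have he : (1 - lam) • x + lam • b = u := by
      rw [hb, smul_add, smul_smul, hlamr, one_smul, hzc]
      module
    have hxc : x ∈ convexHull ℝ ({x} ∪ ball z₀ (2*r)) :=
      subset_convexHull ℝ _ (Or.inl rfl)
    have hbc : b ∈ convexHull ℝ ({x} ∪ ball z₀ (2*r)) :=
      subset_convexHull ℝ _ (Or.inr hbmem)
    have := (convex_convexHull ℝ ({x} ∪ ball z₀ (2*r))) hxc hbc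
      (a := 1 - lam) (b := lam) (by linarith) hlam0.le (by ring)
    rw [he] at this
    exact hconv this
  refine ⟨zc - h tbar, ?_, ?_⟩
  · -- part (i)
    intro t ht htδ
    have htδ1 : |tbar - t| < δ1 := by
      rw [abs_sub_comm]; exact lt_of_lt_of_le htδ (min_le_left _ _)
    have htδ2 : |t - tbar| < δ2 := lt_of_lt_of_le htδ (min_le_right _ _)
    have hHd := hH2' tbar htbar t ht htδ1
    have hnear : ∀ u ∈ C tbar, ∃ y ∈ C t, dist u y < rt/8 := by
      intro u hu
      have h1 : EMetric.infEdist u (C t) ≤ EMetric.hausdorffEdist (C tbar) (C t) :=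
        EMetric.infEdist_le_hausdorffEdist_of_mem hu
      have h2 : EMetric.infEdist u (C t) < ENNReal.ofReal (rt/8) := lt_of_le_of_lt h1 hHd
      obtain ⟨y, hy, hey⟩ := EMetric.infEdist_lt_iff.mp h2
      exact ⟨y, hy, (edist_lt_ofReal).mp hey⟩
    obtain ⟨hCne, hCcl, hCreg⟩ := hH1 t ht
    have hsub : ball zc (rt/2) ⊆ C t := by
      apply core_stability ρ rt (rt/8) hρ hrtpos hrtρ (by positivity) (by linarith)
        (C tbar) (C t) hCcl hCne hCreg hnear zc hball
    intro u hu
    have hu' : ‖u - (zc - h tbar)‖ < rt/4 := by rw [← dist_eq_norm, ← mem_ball]; exact hu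
    have hht : ‖h t - h tbar‖ < rt/4 := hequi' h hA t ht tbar htbar htδ2
    refine ⟨u + h t, ?_, by simp⟩
    apply hsub
    rw [mem_ball, dist_eq_norm]
    have h1 : u + h t - zc = (u - (zc - h tbar)) + (h t - h tbar) := by abel
    rw [h1]
    calc ‖(u - (zc - h tbar)) + (h t - h tbar)‖ ≤ ‖u - (zc - h tbar)‖ + ‖h t - h tbar‖ :=
          norm_add_le _ _
      _ < rt/4 + rt/4 := by linarith
      _ = rt/2 := by ring
  · -- part (ii)
    have hxz : xbar - (zc - h tbar) = x - zc := by rw [← hxe]; show x - h tbar - (zc - h tbar) = x - zc; abel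
    have hxznorm : ‖xbar - (zc - h tbar)‖ ≤ L * rt := by
      rw [hxz, norm_sub_rev]; exact hzcx
    have hnn : 0 ≤ ‖xbar - (zc - h tbar)‖ := norm_nonneg _
    have hstrict : 9 * (L+1)^2 * rt > 8 * (L + 1/4)^2 * rt := by
      nlinarith [hrtpos, hL]
    have hsq : (‖xbar - (zc - h tbar)‖ + rt/4)^2 ≤ (L * rt + rt/4)^2 := by
      nlinarith [hrtpos.le]
    have hkey : (‖xbar - (zc - h tbar)‖ + rt/4)^2 * 8 < rt * ρ := by
      nlinarith [hrtρ9', hrtpos, hL, mul_pos hrtpos hrtpos]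
    calc 1 / ρ * (‖xbar - (zc - h tbar)‖ + rt/4) ^ 2
        = (‖xbar - (zc - h tbar)‖ + rt/4) ^ 2 / ρ := by ring
      _ < rt/4/2 := by rw [div_lt_iff₀ hρ]; nlinarith
end

section
/- Let a < b be real numbers, μ a finite Borel measure on [a,b], ε > 0, and let f : [a,b] → ℝ be a bounded, Borel measurable, right-continuous function satisfying 0 ≤ f(t) ≤ ε + ∫_{[a,t)} f dμ for all t ∈ [a,b]. Then f(t) ≤ ε·exp(μ([a,t))) for all t ∈ [a,b]. -/
open Set MeasureTheory

theorem stmt16 (a b : ℝ) (hab : a < b)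
    (μ : Measure ℝ) [IsFiniteMeasure μ]
    (ε : ℝ) (hε : 0 < ε)
    (f : ℝ → ℝ) (hmeas : Measurable f)
    (hbdd : ∃ M : ℝ, ∀ t ∈ Icc a b, |f t| ≤ M)
    (hrc : ∀ t ∈ Icc a b, ContinuousWithinAt f (Icc a b ∩ Ici t) t)
    (hineq : ∀ t ∈ Icc a b, 0 ≤ f t ∧ f t ≤ ε + ∫ s in Ico a t, f s ∂μ) :
    ∀ t ∈ Icc a b, f t ≤ ε * Real.exp ((μ (Ico a t)).toReal) := by
  obtain ⟨M, hM⟩ := hbdd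
  set g : ℝ → ℝ := fun s => (μ (Ico a s)).toReal with hgdef
  have gmono : Monotone g := fun s s' h =>
    ENNReal.toReal_mono (measure_ne_top μ _) (measure_mono (Ico_subset_Ico_right h))
  have gnn : ∀ s, 0 ≤ g s := fun s => ENNReal.toReal_nonneg
  have gmble : Measurable g := gmono.measurable
  have hofReal : ∀ s, ENNReal.ofReal (g s) = μ (Ico a s) := fun s =>
    ENNReal.ofReal_toReal (measure_ne_top μ _)
  -- distribution bound
  have hdist : ∀ t : ℝ, ∀ x : ℝ, 0 < x →
      μ ({s : ℝ | x ≤ g s} ∩ Ico a t) ≤ ENNReal.ofReal (g t - x) := by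
    intro t x hx
    set S : Set ℝ := {s : ℝ | x ≤ g s} with hSdef
    have hSa : ∀ s ∈ S, a < s := by
      intro s hs
      by_contra h
      push_neg at h
      have : g s = 0 := by simp [hgdef, Ico_eq_empty (not_lt.mpr h)]
      have : x ≤ 0 := by rw [← this]; exact hs
      linarith
    rcases S.eq_empty_or_nonempty with hS | hS
    · simp [hS]
    have hbb : BddBelow S := ⟨a, fun s hs => (hSa s hs).le⟩
    set c := sInf S with hcdef
    have hac : a ≤ c := le_csInf hS fun s hs => (hSa s hs).le
    have upward : ∀ ⦃s s' : ℝ⦄, s ∈ S → s ≤ s' → s' ∈ S := fun s s' hs h =>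
      le_trans hs (gmono h)
    have hIoi : Ioi c ⊆ S := by
      intro s hs
      obtain ⟨s', hs', hlt⟩ := (csInf_lt_iff hbb hS).mp hs
      exact upward hs' hlt.le
    have hSc : S ⊆ Ici c := fun s hs => csInf_le hbb hs
    rcases le_or_gt t c with htc | hct
    · have : S ∩ Ico a t = ∅ := by
        ext s
        simp only [mem_inter_iff, mem_Ico, mem_empty_iff_false, iff_false, not_and]
        intro hs h1 h2
        exact absurd (lt_of_lt_of_le h2 (htc.trans (hSc hs))) (lt_irrefl s)
      simp [this]
    · by_cases hcS : c ∈ S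
      · have hsub : S ∩ Ico a t ⊆ Ico c t := fun s hs => ⟨hSc hs.1, hs.2.2⟩
        have hxA : ENNReal.ofReal x ≤ μ (Ico a c) := by
          rw [← hofReal c]; exact ENNReal.ofReal_le_ofReal hcS
        have key : μ (S ∩ Ico a t) + ENNReal.ofReal x ≤ μ (Ico a t) := by
          calc μ (S ∩ Ico a t) + ENNReal.ofReal x ≤ μ (Ico c t) + μ (Ico a c) :=
                add_le_add (measure_mono hsub) hxA
            _ = μ (Ico a c) + μ (Ico c t) := add_comm _ _
            _ = μ (Ico a c ∪ Ico c t) :=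
                (measure_union Set.Ico_disjoint_Ico_same measurableSet_Ico).symm
            _ = μ (Ico a t) := by rw [Ico_union_Ico_eq_Ico hac hct.le]
        rw [ENNReal.ofReal_sub _ hx.le, hofReal t]
        exact ENNReal.le_sub_of_add_le_right ENNReal.ofReal_ne_top key
      · have hSc' : S ⊆ Ioi c := by
          intro s hs
          rcases lt_or_eq_of_le (show c ≤ s from hSc hs) with h | h
          · exact h
          · exact absurd (h ▸ hs) hcS
        have hsub : S ∩ Ico a t ⊆ Ioo c t := fun s hs => ⟨hSc' hs.1, hs.2.2⟩
        have hxA : ENNReal.ofReal x ≤ μ (Icc a c) := by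
          have hInter : Icc a c = ⋂ n : ℕ, Ico a (c + 1 / (n + 1)) := by
            ext s
            simp only [mem_Icc, mem_iInter, mem_Ico]
            constructor
            · intro ⟨h1, h2⟩ n
              refine ⟨h1, lt_of_le_of_lt h2 ?_⟩
              have : (0:ℝ) < 1 / (n + 1) := by positivity
              linarith
            · intro h
              refine ⟨(h 0).1, ?_⟩
              by_contra hlt
              push_neg at hlt
              obtain ⟨n, hn⟩ := exists_nat_one_div_lt (sub_pos.mpr hlt)
              have := (h n).2
              linarith
          rw [hInter, Directed.measure_iInter]
          · refine le_iInf fun n => ?_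
            have hcc : c < c + 1 / (n + 1) := by
              have : (0:ℝ) < 1 / (n + 1) := by positivity
              linarith
            obtain ⟨s', hs', hlt⟩ := (csInf_lt_iff hbb hS).mp hcc
            calc ENNReal.ofReal x ≤ ENNReal.ofReal (g s') := ENNReal.ofReal_le_ofReal hs'
              _ = μ (Ico a s') := hofReal s'
              _ ≤ μ (Ico a (c + 1 / (n + 1))) :=
                  measure_mono (Ico_subset_Ico_right hlt.le)
          · exact fun n => measurableSet_Ico.nullMeasurableSet
          · intro m n
            have hmono : ∀ k l : ℕ, k ≤ l → (1:ℝ) / (l + 1) ≤ 1 / (k + 1) := by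
              intro k l hkl
              apply one_div_le_one_div_of_le (by positivity)
              have h2 : ((k:ℝ)+1) ≤ ((l:ℝ)+1) := by exact_mod_cast Nat.succ_le_succ hkl
              exact h2
            refine ⟨max m n, Ico_subset_Ico_right (by linarith [hmono m (max m n) (le_max_left m n)]),
              Ico_subset_Ico_right (by linarith [hmono n (max m n) (le_max_right m n)])⟩
          · exact ⟨0, measure_ne_top μ _⟩
        have key : μ (S ∩ Ico a t) + ENNReal.ofReal x ≤ μ (Ico a t) := by
          calc μ (S ∩ Ico a t) + ENNReal.ofReal x ≤ μ (Ioo c t) + μ (Icc a c) :=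
                add_le_add (measure_mono hsub) hxA
            _ = μ (Icc a c) + μ (Ioo c t) := add_comm _ _
            _ = μ (Icc a c ∪ Ioo c t) := by
                refine (measure_union ?_ measurableSet_Ioo).symm
                exact (Set.Iic_disjoint_Ioi le_rfl).mono (fun s hs => hs.2) (fun s hs => hs.1)
            _ = μ (Ico a t) := by rw [Icc_union_Ioo_eq_Ico hac hct]
        rw [ENNReal.ofReal_sub _ hx.le, hofReal t]
        exact ENNReal.le_sub_of_add_le_right ENNReal.ofReal_ne_top key
  have hmbleS : ∀ x : ℝ, MeasurableSet {s : ℝ | x ≤ g s} :=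
    fun x => measurableSet_le measurable_const gmble
  have hkey : ∀ t : ℝ, ∫ s in Ico a t, Real.exp (g s) ∂μ ≤ Real.exp (g t) - 1 := by
    intro t
    set G := g t with hGdef
    have hG : 0 ≤ G := gnn t
    have L1 : ∫⁻ s in Ico a t, ENNReal.ofReal (Real.exp (g s) - 1) ∂μ
        = ∫⁻ x in Ioi (0:ℝ), μ.restrict (Ico a t) {s : ℝ | x ≤ g s}
            * ENNReal.ofReal (Real.exp x) := by
      have h := lintegral_comp_eq_lintegral_meas_le_mul (μ.restrict (Ico a t)) (f := g)
        (g := Real.exp) (Filter.Eventually.of_forall fun s => gnn s) gmble.aemeasurable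
        (fun u _ => Real.continuous_exp.intervalIntegrable 0 u)
        (Filter.Eventually.of_forall fun x => (Real.exp_pos x).le)
      simpa [integral_exp, Real.exp_zero] using h
    have L2 : ∫⁻ x in Ioi (0:ℝ), μ.restrict (Ico a t) {s : ℝ | x ≤ g s}
          * ENNReal.ofReal (Real.exp x)
        ≤ ∫⁻ x in Ioi (0:ℝ), ENNReal.ofReal (G - x) * ENNReal.ofReal (Real.exp x) := by
      refine lintegral_mono_ae ((ae_restrict_iff' measurableSet_Ioi).2
        (Filter.Eventually.of_forall fun x hx => ?_))
      rw [Measure.restrict_apply (hmbleS x)]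
      exact mul_le_mul_left (hdist t x hx) _
    have L3 : ∫⁻ x in Ioi (0:ℝ), ENNReal.ofReal (G - x) * ENNReal.ofReal (Real.exp x)
        ≤ ENNReal.ofReal (Real.exp G - G - 1) := by
      rw [← Ioc_union_Ioi_eq_Ioi hG,
        lintegral_union measurableSet_Ioi (Ioc_disjoint_Ioi le_rfl)]
      have Z : ∫⁻ x in Ioi G, ENNReal.ofReal (G - x) * ENNReal.ofReal (Real.exp x) = 0 := by
        rw [setLIntegral_congr_fun measurableSet_Ioi (g := fun _ => 0)
          (fun x hx => by
            rw [ENNReal.ofReal_eq_zero.2 (by simp only [mem_Ioi] at hx; linarith), zero_mul]),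
          lintegral_zero]
      rw [Z, add_zero]
      have hEq : ∀ x ∈ Ioc (0:ℝ) G, ENNReal.ofReal (G - x) * ENNReal.ofReal (Real.exp x)
          = ENNReal.ofReal ((G - x) * Real.exp x) := fun x hx =>
        (ENNReal.ofReal_mul (by linarith [hx.2])).symm
      rw [setLIntegral_congr_fun measurableSet_Ioc hEq]
      have hcont : Continuous fun x : ℝ => (G - x) * Real.exp x :=
        (continuous_const.sub continuous_id).mul Real.continuous_exp
      have hint : IntegrableOn (fun x : ℝ => (G - x) * Real.exp x) (Ioc 0 G) volume :=
        hcont.integrableOn_Ioc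
      have hnn : 0 ≤ᵐ[volume.restrict (Ioc (0:ℝ) G)] fun x : ℝ => (G - x) * Real.exp x :=
        (ae_restrict_iff' measurableSet_Ioc).2 (Filter.Eventually.of_forall fun x hx =>
          mul_nonneg (by linarith [hx.2]) (Real.exp_pos x).le)
      rw [← ofReal_integral_eq_lintegral_ofReal hint hnn]
      apply ENNReal.ofReal_le_ofReal
      rw [← intervalIntegral.integral_of_le hG]
      have hFTC : ∫ x in (0:ℝ)..G, (G - x) * Real.exp x
          = (G - G + 1) * Real.exp G - (G - 0 + 1) * Real.exp 0 := by
        apply intervalIntegral.integral_eq_sub_of_hasDerivAt (f := fun y : ℝ => (G - y + 1) * Real.exp y)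
        · intro x _
          have h1 : HasDerivAt (fun y : ℝ => G - y + 1) (-1) x := by
            simpa using ((hasDerivAt_id x).const_sub G).add_const 1
          have h2 : HasDerivAt (fun y : ℝ => (G - y + 1) * Real.exp y)
              (-1 * Real.exp x + (G - x + 1) * Real.exp x) x := h1.fun_mul (Real.hasDerivAt_exp x)
          refine h2.congr_deriv ?_
          ring
        · exact hcont.intervalIntegrable 0 G
      rw [hFTC, Real.exp_zero]
      nlinarith [Real.exp_pos G]
    have L4 : ∫⁻ s in Ico a t, ENNReal.ofReal (Real.exp (g s)) ∂μ
        ≤ ENNReal.ofReal (Real.exp G - 1) := by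
      have split : (fun s : ℝ => ENNReal.ofReal (Real.exp (g s)))
          = fun s : ℝ => ENNReal.ofReal (Real.exp (g s) - 1) + ENNReal.ofReal 1 := by
        funext s
        rw [← ENNReal.ofReal_add (by linarith [Real.one_le_exp (gnn s)]) zero_le_one]
        norm_num
      rw [split, lintegral_add_right _ measurable_const, lintegral_const,
        Measure.restrict_apply_univ, ← hofReal t]
      calc ∫⁻ s in Ico a t, ENNReal.ofReal (Real.exp (g s) - 1) ∂μ
            + ENNReal.ofReal 1 * ENNReal.ofReal (g t)
          ≤ ENNReal.ofReal (Real.exp G - G - 1) + ENNReal.ofReal 1 * ENNReal.ofReal G :=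
            add_le_add (L1 ▸ L2.trans L3) le_rfl
        _ = ENNReal.ofReal (Real.exp G - 1) := by
            rw [ENNReal.ofReal_one, one_mul,
              ← ENNReal.ofReal_add (by nlinarith [Real.add_one_le_exp G]) hG]
            congr 1
            ring
    have hnn2 : 0 ≤ᵐ[μ.restrict (Ico a t)] fun s : ℝ => Real.exp (g s) :=
      Filter.Eventually.of_forall fun s => (Real.exp_pos _).le
    rw [integral_eq_lintegral_of_nonneg_ae hnn2
      (Real.measurable_exp.comp gmble).aestronglyMeasurable]
    exact ENNReal.toReal_le_of_le_ofReal
      (by linarith [Real.one_le_exp hG]) L4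
  -- the bootstrap argument
  set φ : ℝ → ℝ := fun s => f s * Real.exp (-g s) with hφdef
  have himg : (φ '' Icc a b).Nonempty := ⟨φ a, mem_image_of_mem _ (left_mem_Icc.2 hab.le)⟩
  have hbddA : BddAbove (φ '' Icc a b) := by
    refine ⟨M, ?_⟩
    rintro _ ⟨s, hs, rfl⟩
    have h1 : 0 ≤ f s := (hineq s hs).1
    have h2 : Real.exp (-g s) ≤ 1 := Real.exp_le_one_iff.2 (by linarith [gnn s])
    calc φ s ≤ f s * 1 := mul_le_mul_of_nonneg_left h2 h1
      _ = f s := mul_one _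
      _ ≤ |f s| := le_abs_self _
      _ ≤ M := hM s hs
  set K := sSup (φ '' Icc a b) with hKdef
  have hφK : ∀ s ∈ Icc a b, φ s ≤ K := fun s hs => le_csSup hbddA (mem_image_of_mem _ hs)
  have hKle : ∀ s ∈ Icc a b, f s ≤ K * Real.exp (g s) := by
    intro s hs
    have h1 : φ s * Real.exp (g s) ≤ K * Real.exp (g s) :=
      mul_le_mul_of_nonneg_right (hφK s hs) (Real.exp_pos _).le
    calc f s = φ s * Real.exp (g s) := by
          rw [hφdef]; simp only [mul_assoc, ← Real.exp_add]; simp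
      _ ≤ K * Real.exp (g s) := h1
  have hK0 : 0 ≤ K := by
    refine le_trans ?_ (hφK a (left_mem_Icc.2 hab.le))
    exact mul_nonneg (hineq a (left_mem_Icc.2 hab.le)).1 (Real.exp_pos _).le
  have hmain : ∀ t ∈ Icc a b, f t ≤ ε + K * (Real.exp (g t) - 1) := by
    intro t ht
    refine (hineq t ht).2.trans (add_le_add_right ?_ ε)
    have hIsub : Ico a t ⊆ Icc a b := fun s hs => ⟨hs.1, hs.2.le.trans ht.2⟩
    have hint_f : IntegrableOn f (Ico a t) μ := by
      refine Integrable.mono' (integrable_const M) hmeas.aestronglyMeasurable ?_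
      refine (ae_restrict_iff' measurableSet_Ico).2 (Filter.Eventually.of_forall fun s hs => ?_)
      rw [Real.norm_eq_abs]
      exact hM s (hIsub hs)
    have hint_e : IntegrableOn (fun s : ℝ => K * Real.exp (g s)) (Ico a t) μ := by
      refine Integrable.mono' (integrable_const (K * Real.exp ((μ univ).toReal)))
        (measurable_const.mul (Real.measurable_exp.comp gmble)).aestronglyMeasurable ?_
      refine Filter.Eventually.of_forall fun s => ?_
      rw [Real.norm_eq_abs, abs_mul, abs_of_nonneg hK0, abs_of_pos (Real.exp_pos _)]
      refine mul_le_mul_of_nonneg_left (Real.exp_le_exp.2 ?_) hK0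
      exact ENNReal.toReal_mono (measure_ne_top μ _) (measure_mono (subset_univ _))
    calc ∫ s in Ico a t, f s ∂μ ≤ ∫ s in Ico a t, K * Real.exp (g s) ∂μ :=
          setIntegral_mono_on hint_f hint_e measurableSet_Ico fun s hs => hKle s (hIsub hs)
      _ = K * ∫ s in Ico a t, Real.exp (g s) ∂μ := integral_const_mul K _
      _ ≤ K * (Real.exp (g t) - 1) := mul_le_mul_of_nonneg_left (hkey t) hK0
  have hKε : K ≤ ε := by
    by_contra hcon
    push_neg at hcon
    set c0 : ℝ := Real.exp (-(μ univ).toReal) with hc0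
    have hc0pos : 0 < c0 := Real.exp_pos _
    have hub : ∀ y ∈ φ '' Icc a b, y ≤ K + (ε - K) * c0 := by
      rintro _ ⟨t, ht, rfl⟩
      have h1 : φ t ≤ (ε + K * (Real.exp (g t) - 1)) * Real.exp (-g t) :=
        mul_le_mul_of_nonneg_right (hmain t ht) (Real.exp_pos _).le
      have h3 : Real.exp (g t) * Real.exp (-g t) = 1 := by
        rw [← Real.exp_add]; simp
      have h2 : (ε + K * (Real.exp (g t) - 1)) * Real.exp (-g t)
          = K + (ε - K) * Real.exp (-g t) := by linear_combination K * h3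
      have h4 : (ε - K) * Real.exp (-g t) ≤ (ε - K) * c0 := by
        apply mul_le_mul_of_nonpos_left _ (by linarith)
        rw [hc0]
        refine Real.exp_le_exp.2 (neg_le_neg ?_)
        exact ENNReal.toReal_mono (measure_ne_top μ _) (measure_mono (subset_univ _))
      linarith
    have : K ≤ K + (ε - K) * c0 := csSup_le himg hub
    nlinarith
  intro t ht
  calc f t ≤ K * Real.exp (g t) := hKle t ht
    _ ≤ ε * Real.exp (g t) := mul_le_mul_of_nonneg_right hKε (Real.exp_pos _).le
end

section
/- In the sublevel-set setting, assume (a) and (b). Then there exists c > 0 such that for every t ∈ [0,T], every x ∈ C(t) with I_ε(t,x) ≠ ∅, and every family of coefficients (λ_i)_{i ∈ I_ε(t,x)} with λ_i ≥ 0 and Σ_{i∈I_ε(t,x)} λ_i = 1, one has ‖Σ_{i∈I_ε(t,x)} λ_i ∇g_i(t,x)‖ ≥ c. -/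
open Set Metric

theorem stmt17 (d m : ℕ) (T : ℝ) (hT : 0 < T)
    (g : Fin m → ℝ → EuclideanSpace ℝ (Fin d) → ℝ)
    (hdiff : ∀ i, ∀ t ∈ Icc (0:ℝ) T, ∀ x, DifferentiableAt ℝ (g i t) x)
    -- assumption (a)
    (ε : ℝ) (hε : 0 < ε)
    (hQbdd : Bornology.IsBounded {p : ℝ × EuclideanSpace ℝ (Fin d) |
      p.1 ∈ Icc (0:ℝ) T ∧ p.2 ∈ Csub g p.1 ∧ (Iactive g ε p.1 p.2).Nonempty})
    (hPLI : ∀ t ∈ Icc (0:ℝ) T, ∀ x ∈ Csub g t, (Iactive g ε t x).Nonempty →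
      ∀ α : Fin m → ℝ, (∀ i, 0 ≤ α i) → (∀ i, i ∉ Iactive g ε t x → α i = 0) →
        ∑ i, α i • gradient (g i t) x = 0 → ∀ i, α i = 0)
    -- assumption (b)
    (hg_cont : ∀ i, ContinuousOn (fun p : ℝ × EuclideanSpace ℝ (Fin d) => g i p.1 p.2)
      (Icc (0:ℝ) T ×ˢ univ))
    (hgrad_cont : ∀ i, ContinuousOn
      (fun p : ℝ × EuclideanSpace ℝ (Fin d) => gradient (g i p.1) p.2)
      (Icc (0:ℝ) T ×ˢ univ))
    (hequi : ∀ ε' > 0, ∃ δ > 0, ∀ i, ∀ x : EuclideanSpace ℝ (Fin d),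
      ∀ s ∈ Icc (0:ℝ) T, ∀ t ∈ Icc (0:ℝ) T, |s - t| < δ → |g i s x - g i t x| < ε') :
    ∃ c > 0, ∀ t ∈ Icc (0:ℝ) T, ∀ x ∈ Csub g t, (Iactive g ε t x).Nonempty →
      ∀ lam : Fin m → ℝ, (∀ i, 0 ≤ lam i) → (∀ i, i ∉ Iactive g ε t x → lam i = 0) →
        (∑ i, lam i) = 1 →
        c ≤ ‖∑ i, lam i • gradient (g i t) x‖ := by
  classical
  -- Work in the product space P = ℝ × E × (Fin m → ℝ)
  set B : Set (ℝ × EuclideanSpace ℝ (Fin d) × (Fin m → ℝ)) :=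
    {p | p.1 ∈ Icc (0:ℝ) T} with hBdef
  have hBclosed : IsClosed B := isClosed_Icc.preimage continuous_fst
  set G : (ℝ × EuclideanSpace ℝ (Fin d) × (Fin m → ℝ)) → ℝ × EuclideanSpace ℝ (Fin d) :=
    fun p => (p.1, p.2.1) with hGdef
  have hGcont : Continuous G := continuous_fst.prodMk (continuous_fst.comp continuous_snd)
  have hGmaps : MapsTo G B (Icc (0:ℝ) T ×ˢ (univ : Set (EuclideanSpace ℝ (Fin d)))) :=
    fun p hp => ⟨hp, mem_univ _⟩
  have hcont_h : ∀ i, ContinuousOn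
      (fun p : ℝ × EuclideanSpace ℝ (Fin d) × (Fin m → ℝ) => g i p.1 p.2.1) B :=
    fun i => (hg_cont i).comp hGcont.continuousOn hGmaps
  -- the constraint set
  set S : Set (ℝ × EuclideanSpace ℝ (Fin d) × (Fin m → ℝ)) :=
    {p | p.1 ∈ Icc (0:ℝ) T ∧ (∀ i, g i p.1 p.2.1 ≤ 0) ∧ (∀ i, 0 ≤ p.2.2 i) ∧
      (∑ i, p.2.2 i) = 1 ∧
      ∀ i, p.2.2 i = 0 ∨ (-ε ≤ g i p.1 p.2.1 ∧ g i p.1 p.2.1 ≤ 0)} with hSdef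
  -- S is closed
  have hSeq : S = B ∩ ((⋂ i, (B ∩ (fun p : ℝ × EuclideanSpace ℝ (Fin d) × (Fin m → ℝ) =>
        g i p.1 p.2.1) ⁻¹' Iic 0)) ∩
      ((⋂ i, {p : ℝ × EuclideanSpace ℝ (Fin d) × (Fin m → ℝ) | 0 ≤ p.2.2 i}) ∩
      ({p : ℝ × EuclideanSpace ℝ (Fin d) × (Fin m → ℝ) | (∑ i, p.2.2 i) = 1} ∩
      ⋂ i, ({p : ℝ × EuclideanSpace ℝ (Fin d) × (Fin m → ℝ) | p.2.2 i = 0} ∪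
        (B ∩ (fun p : ℝ × EuclideanSpace ℝ (Fin d) × (Fin m → ℝ) =>
          g i p.1 p.2.1) ⁻¹' Icc (-ε) 0))))) := by
    ext p
    simp only [hSdef, hBdef, mem_setOf_eq, mem_inter_iff, mem_iInter, mem_preimage,
      mem_Iic, mem_Icc, mem_union]
    constructor
    · rintro ⟨h1, h2, h3, h4, h5⟩
      refine ⟨h1, fun i => ⟨h1, h2 i⟩, h3, h4, fun i => ?_⟩
      rcases h5 i with h | h
      · exact Or.inl h
      · exact Or.inr ⟨h1, h⟩
    · rintro ⟨h1, h2, h3, h4, h5⟩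
      refine ⟨h1, fun i => (h2 i).2, h3, h4, fun i => ?_⟩
      rcases h5 i with h | h
      · exact Or.inl h
      · exact Or.inr h.2
  have hSclosed : IsClosed S := by
    rw [hSeq]
    refine hBclosed.inter (IsClosed.inter ?_ (IsClosed.inter ?_ (IsClosed.inter ?_ ?_)))
    · exact isClosed_iInter fun i =>
        (hcont_h i).preimage_isClosed_of_isClosed hBclosed isClosed_Iic
    · exact isClosed_iInter fun i =>
        isClosed_le continuous_const ((continuous_apply i).comp
          (continuous_snd.comp continuous_snd))
    · exact isClosed_eq (by fun_prop) continuous_const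
    · refine isClosed_iInter fun i => IsClosed.union ?_ ?_
      · exact isClosed_eq ((continuous_apply i).comp
          (continuous_snd.comp continuous_snd)) continuous_const
      · exact (hcont_h i).preimage_isClosed_of_isClosed hBclosed isClosed_Icc
  -- S is bounded
  obtain ⟨R, hR⟩ := isBounded_iff_forall_norm_le.1 hQbdd
  have hmemQ : ∀ p ∈ S, (p.1, p.2.1) ∈ {q : ℝ × EuclideanSpace ℝ (Fin d) |
      q.1 ∈ Icc (0:ℝ) T ∧ q.2 ∈ Csub g q.1 ∧ (Iactive g ε q.1 q.2).Nonempty} := by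
    rintro p ⟨h1, h2, h3, h4, h5⟩
    refine ⟨h1, fun i => h2 i, ?_⟩
    by_contra hne
    have hall : ∀ i, p.2.2 i = 0 := by
      intro i
      rcases h5 i with h | h
      · exact h
      · exact absurd ⟨i, h⟩ hne
    simp [hall] at h4
  have hSsub : S ⊆ closedBall 0 (max R 1) := by
    intro p hp
    rw [mem_closedBall_zero_iff]
    have hQ := hR _ (hmemQ p hp)
    rw [Prod.norm_def] at hQ
    obtain ⟨h1, h2, h3, h4, h5⟩ := hp
    have hlam : ‖p.2.2‖ ≤ 1 := by
      refine (pi_norm_le_iff_of_nonneg zero_le_one).2 fun i => ?_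
      rw [Real.norm_eq_abs, abs_of_nonneg (h3 i)]
      calc p.2.2 i ≤ ∑ j, p.2.2 j :=
            Finset.single_le_sum (fun j _ => h3 j) (Finset.mem_univ i)
        _ = 1 := h4
    rw [Prod.norm_def, Prod.norm_def]
    refine max_le (le_trans (le_max_left _ _) (le_trans hQ (le_max_left _ _))) (max_le ?_ ?_)
    · exact le_trans (le_max_right _ _) (le_trans hQ (le_max_left _ _))
    · exact le_trans hlam (le_max_right _ _)
  have hScompact : IsCompact S :=
    (isCompact_closedBall _ _).of_isClosed_subset hSclosed hSsub
  -- the function to minimize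
  set f : (ℝ × EuclideanSpace ℝ (Fin d) × (Fin m → ℝ)) → ℝ :=
    fun p => ‖∑ i, p.2.2 i • gradient (g i p.1) p.2.1‖ with hfdef
  have hfcont : ContinuousOn f S := by
    have hSB : S ⊆ B := fun p hp => hp.1
    have hsum : ContinuousOn
        (fun p : ℝ × EuclideanSpace ℝ (Fin d) × (Fin m → ℝ) =>
          ∑ i, p.2.2 i • gradient (g i p.1) p.2.1) B := by
      refine continuousOn_finset_sum _ fun i _ => ContinuousOn.fun_smul ?_ ?_
      · exact ((continuous_apply i).comp (continuous_snd.comp continuous_snd)).continuousOn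
      · exact (hgrad_cont i).comp hGcont.continuousOn hGmaps
    rw [hfdef]
    show ContinuousOn (fun p : ℝ × EuclideanSpace ℝ (Fin d) × (Fin m → ℝ) =>
      ‖∑ i, p.2.2 i • gradient (g i p.1) p.2.1‖) S
    exact (hsum.mono hSB).norm
  -- positivity of f on S
  have hfpos : ∀ p ∈ S, 0 < f p := by
    rintro p hp
    obtain ⟨h1, h2, h3, h4, h5⟩ := hp
    rw [hfdef]
    rcases (norm_nonneg (∑ i, p.2.2 i • gradient (g i p.1) p.2.1)).lt_or_eq with h | h
    · exact h
    · exfalso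
      have hzero : ∑ i, p.2.2 i • gradient (g i p.1) p.2.1 = 0 :=
        norm_eq_zero.1 h.symm
      have hne : (Iactive g ε p.1 p.2.1).Nonempty := (hmemQ p ⟨h1, h2, h3, h4, h5⟩).2.2
      have := hPLI p.1 h1 p.2.1 (fun i => h2 i) hne p.2.2 h3
        (fun i hi => by
          rcases h5 i with h' | h'
          · exact h'
          · exact absurd h' hi) hzero
      simp [this] at h4
  by_cases hSne : S.Nonempty
  · obtain ⟨p₀, hp₀S, hp₀min⟩ := hScompact.exists_isMinOn hSne hfcont
    refine ⟨f p₀, hfpos p₀ hp₀S, ?_⟩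
    intro t ht x hx hne lam hlam0 hlamsupp hlamsum
    have hqS : (t, x, lam) ∈ S := by
      refine ⟨ht, fun i => hx i, hlam0, hlamsum, fun i => ?_⟩
      by_cases hi : i ∈ Iactive g ε t x
      · exact Or.inr hi
      · exact Or.inl (hlamsupp i hi)
    have := hp₀min hqS
    simpa [hfdef] using this
  · refine ⟨1, one_pos, ?_⟩
    intro t ht x hx hne lam hlam0 hlamsupp hlamsum
    exfalso
    apply hSne
    refine ⟨(t, x, lam), ht, fun i => hx i, hlam0, hlamsum, fun i => ?_⟩
    by_cases hi : i ∈ Iactive g ε t x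
    · exact Or.inr hi
    · exact Or.inl (hlamsupp i hi)
end
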